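/- arXiv:2101.07782 — 4 statements merged into one kernel-verified Lean document; each statement's English description precedes it below -/
import Mathlib

section
/- Let γ ≥ 1 be a real number and let F_X, F_Y, F_Z : (0,∞) → ℝ≥0 be measurable functions with finite positive essential suprema M_X and M_Y for F_X and F_Y respectively, finite integrals ∫ F_X^γ, ∫ F_Y^γ, and such that for Lebesgue measure λ on ℝ and all s₁, s₂ > 0, λ(L⁺_{F_Z}(s₁+s₂)) ≥ λ(L⁺_{F_X}(s₁)) + λ(L⁺_{F_Y}(s₂)). Then (∫₀^∞ F_Z(t)^γ dt)^{1/(γ+1)} ≥ (∫₀^∞ F_X(t)^γ dt)^{1/(γ+1)} + (∫₀^∞ F_Y(t)^γ dt)^{1/(γ+1)}. -/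
open MeasureTheory Set

/-- restrict-measure of a sep set. -/
lemma spill_meas_sep (F : ℝ → ENNReal) (hm : Measurable F) (c : ENNReal) :
    volume {t ∈ Set.Ioi (0:ℝ) | c ≤ F t}
      = (volume.restrict (Set.Ioi (0:ℝ))) {t | c ≤ F t} := by
  rw [Measure.restrict_apply (measurableSet_le measurable_const hm)]
  congr 1
  ext t
  simp [Set.mem_sep_iff, and_comm]

/-- Bridge: superlevel sets of the real-valued rescaled function vs the ENNReal function. -/
lemma spill_meas_div (F : ℝ → ENNReal) (hm : Measurable F)
    (hfin : ∀ᵐ t ∂(volume.restrict (Set.Ioi (0:ℝ))), F t ≠ ⊤) (k s : ℝ) (hk : 0 < k) :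
    (volume.restrict (Set.Ioi (0:ℝ))) {a | s ≤ (F a).toReal / k}
      = volume {t ∈ Set.Ioi (0:ℝ) | ENNReal.ofReal (k * s) ≤ F t} := by
  rw [spill_meas_sep F hm]
  apply measure_congr
  rw [Filter.eventuallyEq_set]
  filter_upwards [hfin] with a ha
  show s ≤ (F a).toReal / k ↔ ENNReal.ofReal (k * s) ≤ F a
  rw [le_div_iff₀ hk, ENNReal.ofReal_le_iff_le_toReal ha, mul_comm]

/-- Layer cake for a rescaled ENNReal-valued function. -/
lemma spill_layercake (γ : ℝ) (hγ : 1 ≤ γ) (F : ℝ → ENNReal) (hm : Measurable F)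
    (hfin : ∀ᵐ t ∂(volume.restrict (Set.Ioi (0:ℝ))), F t ≠ ⊤) (k : ℝ) (hk : 0 < k) :
    ENNReal.ofReal γ * ∫⁻ s in Set.Ioi (0:ℝ),
        (volume.restrict (Set.Ioi (0:ℝ))) {a | s ≤ (F a).toReal / k}
          * ENNReal.ofReal (s ^ (γ - 1))
      = ENNReal.ofReal ((1/k) ^ γ) * ∫⁻ t in Set.Ioi (0:ℝ), F t ^ γ := by
  have hγ0 : (0:ℝ) < γ := lt_of_lt_of_le one_pos hγ
  have key := lintegral_rpow_eq_lintegral_meas_le_mul (volume.restrict (Set.Ioi (0:ℝ)))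
      (f := fun a => (F a).toReal / k)
      (Filter.Eventually.of_forall fun a => by positivity)
      ((hm.ennreal_toReal.div_const k).aemeasurable) hγ0
  rw [← key, ← lintegral_const_mul' _ _ ENNReal.ofReal_ne_top]
  apply lintegral_congr_ae
  filter_upwards [hfin] with a ha
  have h1 : ((F a).toReal / k) ^ γ = (1/k) ^ γ * (F a).toReal ^ γ := by
    rw [div_eq_mul_inv, ← one_div, Real.mul_rpow ENNReal.toReal_nonneg (by positivity), mul_comm]
  rw [h1, ENNReal.ofReal_mul (by positivity), ENNReal.toReal_rpow,
      ENNReal.ofReal_toReal (ENNReal.rpow_ne_top_of_nonneg hγ0.le ha)]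

/-- Measurability of the weighted tail integrand. -/
lemma spill_meas_integrand (F : ℝ → ENNReal) (k c : ℝ) :
    Measurable (fun s : ℝ =>
      (volume.restrict (Set.Ioi (0:ℝ))) {a | s ≤ (F a).toReal / k}
        * ENNReal.ofReal (s ^ c)) := by
  apply Measurable.mul
  · apply Antitone.measurable
    intro s₁ s₂ h
    exact measure_mono (fun a ha => le_trans h ha)
  · exact (measurable_id.pow_const c).ennreal_ofReal

/-- The 'spillover' lemma: if superlevel-set measures of `F_Z` dominate the sums of those
of `F_X` and `F_Y`, then the `1/(γ+1)`-th powers of the integrals of the `γ`-th powers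
are superadditive. -/
theorem stmt9 (γ : ℝ) (hγ : 1 ≤ γ) (FX FY FZ : ℝ → ENNReal)
    (hmX : Measurable FX) (hmY : Measurable FY) (hmZ : Measurable FZ)
    (MX MY : ENNReal)
    (hMX : essSup FX (volume.restrict (Set.Ioi (0 : ℝ))) = MX)
    (hMX0 : 0 < MX) (hMXtop : MX ≠ ⊤)
    (hMY : essSup FY (volume.restrict (Set.Ioi (0 : ℝ))) = MY)
    (hMY0 : 0 < MY) (hMYtop : MY ≠ ⊤)
    (hIX : ∫⁻ t in Set.Ioi (0 : ℝ), FX t ^ γ ≠ ⊤)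
    (hIY : ∫⁻ t in Set.Ioi (0 : ℝ), FY t ^ γ ≠ ⊤)
    (hsub : ∀ s₁ s₂ : ℝ, 0 < s₁ → 0 < s₂ →
      volume {t ∈ Set.Ioi (0 : ℝ) | ENNReal.ofReal s₁ ≤ FX t} +
        volume {t ∈ Set.Ioi (0 : ℝ) | ENNReal.ofReal s₂ ≤ FY t} ≤
      volume {t ∈ Set.Ioi (0 : ℝ) | ENNReal.ofReal (s₁ + s₂) ≤ FZ t}) :
    (∫⁻ t in Set.Ioi (0 : ℝ), FX t ^ γ) ^ (1 / (γ + 1)) +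
      (∫⁻ t in Set.Ioi (0 : ℝ), FY t ^ γ) ^ (1 / (γ + 1)) ≤
    (∫⁻ t in Set.Ioi (0 : ℝ), FZ t ^ γ) ^ (1 / (γ + 1)) := by
  have hγ0 : (0:ℝ) < γ := lt_of_lt_of_le one_pos hγ
  have hγ1 : (0:ℝ) < γ + 1 := by linarith
  set ρ := volume.restrict (Set.Ioi (0:ℝ)) with hρ
  -- trivial case: I_Z = ⊤
  by_cases hIZ : (∫⁻ t in Set.Ioi (0 : ℝ), FZ t ^ γ) = ⊤
  · rw [hIZ, ENNReal.top_rpow_of_pos (by positivity)]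
    exact le_top
  -- a.e. finiteness
  have hfinX : ∀ᵐ t ∂ρ, FX t ≠ ⊤ := by
    filter_upwards [ae_le_essSup (f := FX) (μ := ρ)] with t ht
    rw [hρ] at ht; rw [hMX] at ht
    exact fun h => hMXtop (top_le_iff.mp (h ▸ ht))
  have hfinY : ∀ᵐ t ∂ρ, FY t ≠ ⊤ := by
    filter_upwards [ae_le_essSup (f := FY) (μ := ρ)] with t ht
    rw [hρ] at ht; rw [hMY] at ht
    exact fun h => hMYtop (top_le_iff.mp (h ▸ ht))
  have hfinZ : ∀ᵐ t ∂ρ, FZ t ≠ ⊤ := by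
    filter_upwards [ae_lt_top (hmZ.pow_const γ) hIZ] with t ht
    intro h
    rw [h, ENNReal.top_rpow_of_pos hγ0] at ht
    exact (lt_irrefl _ ht)
  -- positivity of the integrals
  have hpos : ∀ (F : ℝ → ENNReal), Measurable F →
      ∀ (M : ENNReal), essSup F ρ = M → 0 < M →
      (∫⁻ t in Set.Ioi (0 : ℝ), F t ^ γ) ≠ 0 := by
    intro F hmF M hM hM0 h0
    have hF0 : F =ᵐ[ρ] 0 := by
      filter_upwards [(lintegral_eq_zero_iff (hmF.pow_const γ)).mp h0] with t ht
      simpa [ENNReal.rpow_eq_zero_iff, hγ0, not_lt.mpr hγ0.le] using ht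
    rw [← hM, ENNReal.essSup_eq_zero_iff.mpr hF0] at hM0
    exact lt_irrefl _ hM0
  have hIX0 : (∫⁻ t in Set.Ioi (0 : ℝ), FX t ^ γ) ≠ 0 := hpos FX hmX MX hMX hMX0
  have hIY0 : (∫⁻ t in Set.Ioi (0 : ℝ), FY t ^ γ) ≠ 0 := hpos FY hmY MY hMY hMY0
  -- the (γ+1)-th roots, as positive reals
  set c := ((∫⁻ t in Set.Ioi (0 : ℝ), FX t ^ γ) ^ (1/(γ+1))).toReal with hcd
  set d := ((∫⁻ t in Set.Ioi (0 : ℝ), FY t ^ γ) ^ (1/(γ+1))).toReal with hdd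
  have hXtop : (∫⁻ t in Set.Ioi (0 : ℝ), FX t ^ γ) ^ (1/(γ+1)) ≠ ⊤ :=
    ENNReal.rpow_ne_top_of_nonneg (by positivity) hIX
  have hYtop : (∫⁻ t in Set.Ioi (0 : ℝ), FY t ^ γ) ^ (1/(γ+1)) ≠ ⊤ :=
    ENNReal.rpow_ne_top_of_nonneg (by positivity) hIY
  have haX : (∫⁻ t in Set.Ioi (0 : ℝ), FX t ^ γ) ^ (1/(γ+1)) = ENNReal.ofReal c := by
    rw [hcd, ENNReal.ofReal_toReal hXtop]
  have haY : (∫⁻ t in Set.Ioi (0 : ℝ), FY t ^ γ) ^ (1/(γ+1)) = ENNReal.ofReal d := by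
    rw [hdd, ENNReal.ofReal_toReal hYtop]
  have hc0 : 0 < c := by
    rw [hcd]
    apply ENNReal.toReal_pos _ hXtop
    intro h
    rcases ENNReal.rpow_eq_zero_iff.mp h with ⟨h1, _⟩ | ⟨h1, _⟩
    · exact hIX0 h1
    · exact hIX h1
  have hd0 : 0 < d := by
    rw [hdd]
    apply ENNReal.toReal_pos _ hYtop
    intro h
    rcases ENNReal.rpow_eq_zero_iff.mp h with ⟨h1, _⟩ | ⟨h1, _⟩
    · exact hIY0 h1
    · exact hIY h1
  set e := c + d with he
  have he0 : 0 < e := by rw [he]; positivity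
  have hkX : 0 < c / e := div_pos hc0 he0
  have hkY : 0 < d / e := div_pos hd0 he0
  -- key pointwise inequality on weighted tail measures
  have key : ∀ s : ℝ, 0 < s →
      ρ {a | s ≤ (FX a).toReal / (c/e)} * ENNReal.ofReal (s ^ (γ-1))
        + ρ {a | s ≤ (FY a).toReal / (d/e)} * ENNReal.ofReal (s ^ (γ-1))
      ≤ ρ {a | s ≤ (FZ a).toReal / 1} * ENNReal.ofReal (s ^ (γ-1)) := by
    intro s hs
    rw [← add_mul]
    apply mul_le_mul_left
    rw [hρ, spill_meas_div FX hmX hfinX (c/e) s hkX,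
        spill_meas_div FY hmY hfinY (d/e) s hkY,
        spill_meas_div FZ hmZ hfinZ 1 s one_pos]
    have h := hsub ((c/e)*s) ((d/e)*s) (by positivity) (by positivity)
    have hsum : (c/e)*s + (d/e)*s = 1*s := by
      rw [he]
      field_simp
    rwa [hsum] at h
  -- integrate the pointwise inequality
  have hint :
      (∫⁻ s in Set.Ioi (0:ℝ), ρ {a | s ≤ (FX a).toReal / (c/e)} * ENNReal.ofReal (s ^ (γ-1)))
        + (∫⁻ s in Set.Ioi (0:ℝ), ρ {a | s ≤ (FY a).toReal / (d/e)} * ENNReal.ofReal (s ^ (γ-1)))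
      ≤ ∫⁻ s in Set.Ioi (0:ℝ), ρ {a | s ≤ (FZ a).toReal / 1} * ENNReal.ofReal (s ^ (γ-1)) := by
    rw [← lintegral_add_left (by rw [hρ]; exact spill_meas_integrand FX (c/e) (γ-1))]
    apply lintegral_mono_ae
    filter_upwards [self_mem_ae_restrict measurableSet_Ioi] with s hs
    exact key s hs
  have hmain := mul_le_mul_right hint (ENNReal.ofReal γ)
  rw [mul_add, hρ, spill_layercake γ hγ FX hmX hfinX (c/e) hkX,
      spill_layercake γ hγ FY hmY hfinY (d/e) hkY,
      spill_layercake γ hγ FZ hmZ hfinZ 1 one_pos] at hmain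
  rw [show (1:ℝ)/1 = 1 by norm_num, Real.one_rpow, ENNReal.ofReal_one, one_mul] at hmain
  -- express the integrals via c, d
  have hIXc : (∫⁻ t in Set.Ioi (0 : ℝ), FX t ^ γ) = ENNReal.ofReal (c ^ (γ+1)) := by
    rw [← ENNReal.ofReal_rpow_of_pos hc0, ← haX, ← ENNReal.rpow_mul, one_div,
        inv_mul_cancel₀ hγ1.ne', ENNReal.rpow_one]
  have hIYc : (∫⁻ t in Set.Ioi (0 : ℝ), FY t ^ γ) = ENNReal.ofReal (d ^ (γ+1)) := by
    rw [← ENNReal.ofReal_rpow_of_pos hd0, ← haY, ← ENNReal.rpow_mul, one_div,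
        inv_mul_cancel₀ hγ1.ne', ENNReal.rpow_one]
  have halg : ∀ x : ℝ, 0 < x → ((1:ℝ)/(x/e))^γ * x^(γ+1) = e^γ * x := by
    intro x hx
    have hxγ : (0:ℝ) < x ^ γ := Real.rpow_pos_of_pos hx γ
    rw [one_div_div, Real.div_rpow he0.le hx.le, Real.rpow_add hx, Real.rpow_one]
    field_simp
  rw [hIXc, hIYc,
      ← ENNReal.ofReal_mul (Real.rpow_nonneg (le_of_lt (one_div_pos.mpr hkX)) γ),
      ← ENNReal.ofReal_mul (Real.rpow_nonneg (le_of_lt (one_div_pos.mpr hkY)) γ),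
      halg c hc0, halg d hd0,
      ← ENNReal.ofReal_add (by positivity) (by positivity),
      show e^γ*c + e^γ*d = e^(γ+1) by rw [Real.rpow_add he0, Real.rpow_one]; ring] at hmain
  -- conclude
  rw [haX, haY, ← ENNReal.ofReal_add hc0.le hd0.le, ← he]
  calc ENNReal.ofReal e
      = (ENNReal.ofReal (e ^ (γ+1))) ^ (1/(γ+1)) := by
        rw [← ENNReal.ofReal_rpow_of_pos he0, ← ENNReal.rpow_mul, mul_one_div,
          div_self hγ1.ne', ENNReal.rpow_one]
    _ ≤ _ := ENNReal.rpow_le_rpow hmain (by positivity)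
end

section
/- Let G be a unimodular locally compact group with Haar measure μ and let G' be an open subgroup of G. Suppose n ≥ 1 is an integer such that for all compact A, B ⊆ G' of positive measure, μ(AB)^{1/n} ≥ μ(A)^{1/n} + μ(B)^{1/n}. Then the same inequality holds for all compact X, Y ⊆ G of positive measure: μ(XY)^{1/n} ≥ μ(X)^{1/n} + μ(Y)^{1/n}. -/
open MeasureTheory Pointwise
open scoped ENNReal NNReal

section Aux

variable {G : Type*} [Group G] [TopologicalSpace G] [IsTopologicalGroup G]
    [LocallyCompactSpace G] [MeasurableSpace G] [BorelSpace G]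

/-- Superadditivity of measures along pairwise disjoint measurable "frames". -/
private lemma sum_le_of_disjoint_frames {ι : Type*} (μ : Measure G) (t : Finset ι)
    (s F : ι → Set G) :
    (∀ i ∈ t, s i ⊆ F i) → (∀ i ∈ t, MeasurableSet (F i)) →
    (∀ i ∈ t, ∀ j ∈ t, i ≠ j → Disjoint (F i) (F j)) →
    ∀ U : Set G, (∀ i ∈ t, s i ⊆ U) → ∑ i ∈ t, μ (s i) ≤ μ U := by
  classical
  induction t using Finset.induction_on with
  | empty => intro _ _ _ U _; simp
  | @insert a t ha ih =>
    intro hsF hF hd U hU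
    rw [Finset.sum_insert ha]
    have hamem : a ∈ insert a t := Finset.mem_insert_self a t
    have h1 : μ (s a) ≤ μ (U ∩ F a) :=
      measure_mono (Set.subset_inter (hU a hamem) (hsF a hamem))
    have h2 : ∑ i ∈ t, μ (s i) ≤ μ (U \ F a) := by
      refine ih (fun i hi => hsF i (Finset.mem_insert_of_mem hi))
        (fun i hi => hF i (Finset.mem_insert_of_mem hi))
        (fun i hi j hj hij =>
          hd i (Finset.mem_insert_of_mem hi) j (Finset.mem_insert_of_mem hj) hij)
        (U \ F a) ?_
      intro i hi
      refine Set.subset_diff.2 ⟨hU i (Finset.mem_insert_of_mem hi), ?_⟩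
      have hne : i ≠ a := by rintro rfl; exact ha hi
      exact ((hd i (Finset.mem_insert_of_mem hi) a hamem hne).mono_left
        (hsF i (Finset.mem_insert_of_mem hi)))
    calc μ (s a) + ∑ i ∈ t, μ (s i) ≤ μ (U ∩ F a) + μ (U \ F a) := add_le_add h1 h2
      _ = μ U := measure_inter_add_diff U (hF a hamem)

/-- A unimodular Haar measure is inversion invariant on compact sets. -/
private lemma measure_inv_compact (μ : Measure G) [μ.IsHaarMeasure] [μ.IsMulRightInvariant]
    {S : Set G} (hS : IsCompact S) : μ S⁻¹ = μ S := by
  have key : ∀ K : Set G, IsCompact K →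
      μ.inv K = (μ.inv.haarScalarFactor μ : ℝ≥0∞) * μ K := fun K hK =>
    Measure.measure_isMulInvariant_eq_smul_of_isCompact_closure μ.inv μ hK.closure
  set c : ℝ≥0∞ := (μ.inv.haarScalarFactor μ : ℝ≥0∞) with hc
  obtain ⟨K⟩ : Nonempty (TopologicalSpace.PositiveCompacts G) := inferInstance
  have e1 : μ (((K : Set G))⁻¹)⁻¹ = c * μ ((K : Set G)⁻¹) := by
    rw [← Measure.inv_apply]; exact key _ K.isCompact.inv
  have e2 : μ ((K : Set G)⁻¹) = c * μ (K : Set G) := by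
    rw [← Measure.inv_apply]; exact key _ K.isCompact
  have h1 : μ (K : Set G) = c * c * μ (K : Set G) := by
    conv_lhs => rw [← inv_inv (K : Set G)]
    rw [e1, e2, mul_assoc]
  have hK0 : μ (K : Set G) ≠ 0 :=
    (μ.measure_pos_of_nonempty_interior K.interior_nonempty).ne'
  have hKfin : μ (K : Set G) ≠ ⊤ := K.isCompact.measure_lt_top.ne
  have hcc : c * c = 1 := by
    have : c * c * μ (K : Set G) = 1 * μ (K : Set G) := by rw [← h1, one_mul]
    exact (ENNReal.mul_left_inj hK0 hKfin).1 this
  have hc1 : c = 1 := by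
    have h2 : c ^ 2 = 1 ^ 2 := by rw [pow_two, hcc, one_pow]
    exact (ENNReal.pow_right_strictMono two_ne_zero).injective h2
  have := key S⁻¹ hS.inv
  rw [Measure.inv_apply, inv_inv, hc1, one_mul] at this
  exact this.symm

/-- Core estimate: if `B ⊆ G'` is a compact set of positive measure, and every left-coset
piece of `X` has `(piece)^{1/n} * v ≤ (μ B)^{1/n} * u`, then
`μ X * (u+v)^n ≤ μ (X * B * {y}) * u^n`. -/
private lemma core (μ : Measure G) [μ.IsHaarMeasure] [μ.IsMulRightInvariant]
    (G' : Subgroup G) (hG' : IsOpen (G' : Set G)) (n : ℕ) (hn : 1 ≤ n)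
    (hBM : ∀ A B : Set G, IsCompact A → IsCompact B →
      A ⊆ (G' : Set G) → B ⊆ (G' : Set G) → 0 < μ A → 0 < μ B →
      μ A ^ ((1 : ℝ) / n) + μ B ^ ((1 : ℝ) / n) ≤ μ (A * B) ^ ((1 : ℝ) / n))
    (X : Set G) (hX : IsCompact X) (B : Set G) (hB : IsCompact B)
    (hBG : B ⊆ (G' : Set G)) (hBpos : 0 < μ B) (y : G) (u v : ℝ≥0∞)
    (hcond : ∀ q : G ⧸ G',
      μ (X ∩ QuotientGroup.mk ⁻¹' {q}) ^ ((1 : ℝ) / n) * v ≤ μ B ^ ((1 : ℝ) / n) * u) :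
    μ X * (u + v) ^ n ≤ μ (X * B * {y}) * u ^ n := by
  classical
  have hn0 : n ≠ 0 := by omega
  have hn0' : (n : ℝ) ≠ 0 := by exact_mod_cast hn0
  have hrpow_pow : ∀ x : ℝ≥0∞, (x ^ ((1 : ℝ) / n)) ^ (n : ℕ) = x := fun x => by
    rw [← ENNReal.rpow_natCast (x ^ ((1 : ℝ) / n)) n, ← ENNReal.rpow_mul, one_div,
      inv_mul_cancel₀ hn0', ENNReal.rpow_one]
  haveI hdisc : DiscreteTopology (G ⧸ G') := QuotientGroup.discreteTopology hG'
  have hmk : Continuous (QuotientGroup.mk : G → G ⧸ G') := continuous_quotient_mk'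
  have hTfin : ((QuotientGroup.mk : G → G ⧸ G') '' X).Finite :=
    (hX.image hmk).finite ⟨inferInstance⟩
  set T : Finset (G ⧸ G') := hTfin.toFinset with hT
  set Xp : (G ⧸ G') → Set G := fun q => X ∩ QuotientGroup.mk ⁻¹' {q} with hXp
  have hXsub : X ⊆ ⋃ q ∈ T, Xp q := by
    intro x hx
    refine Set.mem_biUnion (hTfin.mem_toFinset.mpr (Set.mem_image_of_mem _ hx)) ⟨hx, rfl⟩
  have step1 : μ X ≤ ∑ q ∈ T, μ (Xp q) :=
    (measure_mono hXsub).trans (measure_biUnion_finset_le T Xp)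
  have step2 : ∀ q : G ⧸ G', μ (Xp q) * (u + v) ^ n ≤ μ (Xp q * B * {y}) * u ^ n := by
    intro q
    rcases eq_or_ne (μ (Xp q)) 0 with h0 | h0
    · simp [h0]
    set g : G := q.out with hg
    have hgq : (QuotientGroup.mk g : G ⧸ G') = q := QuotientGroup.out_eq' q
    set A : Set G := g⁻¹ • Xp q with hA
    have hXpc : IsCompact (Xp q) :=
      hX.inter_right (isClosed_singleton.preimage hmk)
    have hAc : IsCompact A := hXpc.smul _
    have hAG : A ⊆ (G' : Set G) := by
      rintro a ⟨x, ⟨hxX, hxq⟩, rfl⟩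
      have hmkx : (QuotientGroup.mk x : G ⧸ G') = q := hxq
      have : (QuotientGroup.mk g : G ⧸ G') = QuotientGroup.mk x := by rw [hgq, hmkx]
      have hmem : g⁻¹ * x ∈ G' := QuotientGroup.eq.mp this
      simpa [smul_eq_mul] using hmem
    have hμA : μ A = μ (Xp q) := measure_smul μ g⁻¹ (Xp q)
    have hApos : 0 < μ A := by rw [hμA]; exact pos_iff_ne_zero.2 h0
    have hkey := hBM A B hAc hB hAG hBG hApos hBpos
    have hXpA : Xp q = g • A := (smul_inv_smul g (Xp q)).symm
    have e1 : Xp q * B * {y} = g • (A * B) * {y} := by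
      rw [hXpA, smul_mul_assoc]
    have e2 : μ (Xp q * B * {y}) = μ (A * B) := by
      rw [e1]
      have himg : (g • (A * B)) * {y} = (fun x => x * y⁻¹) ⁻¹' (g • (A * B)) := by
        rw [Set.mul_singleton]
        ext z
        simp only [Set.mem_image, Set.mem_preimage]
        constructor
        · rintro ⟨w, hw, rfl⟩; simpa using hw
        · intro hz; exact ⟨z * y⁻¹, hz, by simp⟩
      rw [himg, measure_preimage_mul_right μ y⁻¹ _, measure_smul μ g _]
    rw [e2, ← hμA]
    have hcondq : μ A ^ ((1 : ℝ) / n) * v ≤ μ B ^ ((1 : ℝ) / n) * u := by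
      rw [hμA]; exact hcond q
    calc μ A * (u + v) ^ n = (μ A ^ ((1 : ℝ) / n) * (u + v)) ^ n := by
          rw [mul_pow, hrpow_pow]
      _ ≤ (μ (A * B) ^ ((1 : ℝ) / n) * u) ^ n := by
          refine pow_le_pow_left' ?_ n
          calc μ A ^ ((1 : ℝ) / n) * (u + v)
              = μ A ^ ((1 : ℝ) / n) * u + μ A ^ ((1 : ℝ) / n) * v := by rw [mul_add]
            _ ≤ μ A ^ ((1 : ℝ) / n) * u + μ B ^ ((1 : ℝ) / n) * u :=
                add_le_add_right hcondq _
            _ = (μ A ^ ((1 : ℝ) / n) + μ B ^ ((1 : ℝ) / n)) * u := by rw [add_mul]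
            _ ≤ μ (A * B) ^ ((1 : ℝ) / n) * u := mul_le_mul_left hkey u
      _ = μ (A * B) * u ^ n := by rw [mul_pow, hrpow_pow]
  have step3 : ∑ q ∈ T, μ (Xp q * B * {y}) ≤ μ (X * B * {y}) := by
    refine sum_le_of_disjoint_frames μ T (fun q => Xp q * B * {y})
      (fun q => (fun x => x * y⁻¹) ⁻¹' (QuotientGroup.mk ⁻¹' ({q} : Set (G ⧸ G'))))
      ?_ ?_ ?_ (X * B * {y}) ?_
    · intro q _
      intro z hz
      have hz' : z ∈ Xp q * B * {y} := hz
      rw [Set.mul_singleton] at hz'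
      replace hz := hz'
      obtain ⟨w, hw, rfl⟩ := hz
      obtain ⟨a, ha, b, hb, rfl⟩ := hw
      have hmka : (QuotientGroup.mk a : G ⧸ G') = q := ha.2
      have : (QuotientGroup.mk (a * b) : G ⧸ G') = q := by
        rw [← hmka]
        exact (QuotientGroup.eq.mpr (by simpa using G'.inv_mem (hBG hb))).symm
      simpa using this
    · intro q _
      exact ((isClosed_singleton.preimage hmk).measurableSet).preimage
        (measurable_mul_const y⁻¹)
    · intro i _ j _ hij
      rw [Set.disjoint_left]
      rintro x hxi hxj
      simp only [Set.mem_preimage, Set.mem_singleton_iff] at hxi hxj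
      exact hij (hxi ▸ hxj ▸ rfl)
    · intro q _
      exact Set.mul_subset_mul (Set.mul_subset_mul Set.inter_subset_left subset_rfl) subset_rfl
  calc μ X * (u + v) ^ n ≤ (∑ q ∈ T, μ (Xp q)) * (u + v) ^ n :=
        mul_le_mul_left step1 _
    _ = ∑ q ∈ T, μ (Xp q) * (u + v) ^ n := Finset.sum_mul _ _ _
    _ ≤ ∑ q ∈ T, μ (Xp q * B * {y}) * u ^ n := Finset.sum_le_sum fun q _ => step2 q
    _ = (∑ q ∈ T, μ (Xp q * B * {y})) * u ^ n := (Finset.sum_mul _ _ _).symm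
    _ ≤ μ (X * B * {y}) * u ^ n := mul_le_mul_left step3 _

/-- The maximal left-coset piece of a compact set of positive measure: it exists,
it bounds all pieces, and it is positive. -/
private lemma piece_facts (μ : Measure G) [μ.IsHaarMeasure]
    (G' : Subgroup G) (hG' : IsOpen (G' : Set G))
    (Z : Set G) (hZ : IsCompact Z) (hZpos : 0 < μ Z) :
    ∃ c : ℝ≥0∞, ∃ q1 : G ⧸ G', (∀ q : G ⧸ G', μ (Z ∩ QuotientGroup.mk ⁻¹' {q}) ≤ c) ∧
      μ (Z ∩ QuotientGroup.mk ⁻¹' {q1}) = c ∧ 0 < c := by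
  classical
  haveI hdisc : DiscreteTopology (G ⧸ G') := QuotientGroup.discreteTopology hG'
  have hmk : Continuous (QuotientGroup.mk : G → G ⧸ G') := continuous_quotient_mk'
  have hTfin : ((QuotientGroup.mk : G → G ⧸ G') '' Z).Finite :=
    (hZ.image hmk).finite ⟨inferInstance⟩
  set T : Finset (G ⧸ G') := hTfin.toFinset with hT
  set f : (G ⧸ G') → ℝ≥0∞ := fun q => μ (Z ∩ QuotientGroup.mk ⁻¹' {q}) with hf
  have hTne : T.Nonempty := by
    obtain ⟨z, hz⟩ := nonempty_of_measure_ne_zero hZpos.ne'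
    exact ⟨QuotientGroup.mk z, hTfin.mem_toFinset.mpr (Set.mem_image_of_mem _ hz)⟩
  obtain ⟨q1, hq1T, hq1⟩ := T.exists_mem_eq_sup hTne f
  have hbound : ∀ q : G ⧸ G', f q ≤ T.sup f := by
    intro q
    by_cases hq : q ∈ T
    · exact Finset.le_sup hq
    · have : Z ∩ QuotientGroup.mk ⁻¹' {q} = ∅ := by
        ext x
        simp only [Set.mem_inter_iff, Set.mem_preimage, Set.mem_singleton_iff,
          Set.mem_empty_iff_false, iff_false, not_and]
        intro hx hxq
        exact hq (hTfin.mem_toFinset.mpr ⟨x, hx, hxq⟩)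
      simp [hf, this]
  refine ⟨T.sup f, q1, hbound, hq1.symm, ?_⟩
  rcases eq_or_ne (T.sup f) 0 with h0 | h0
  · exfalso
    have hZsub : Z ⊆ ⋃ q ∈ T, Z ∩ QuotientGroup.mk ⁻¹' {q} := by
      intro x hx
      refine Set.mem_biUnion (hTfin.mem_toFinset.mpr (Set.mem_image_of_mem _ hx)) ⟨hx, rfl⟩
    have : μ Z ≤ ∑ q ∈ T, f q :=
      (measure_mono hZsub).trans (measure_biUnion_finset_le T _)
    have hzero : ∑ q ∈ T, f q = 0 := by
      refine Finset.sum_eq_zero fun q hq => le_antisymm ?_ zero_le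
      rw [← h0]; exact Finset.le_sup hq
    rw [hzero] at this
    exact hZpos.ne' (le_antisymm this zero_le)
  · exact pos_iff_ne_zero.2 h0

/-- One half of the case analysis. -/
private lemma half (μ : Measure G) [μ.IsHaarMeasure] [μ.IsMulRightInvariant]
    (G' : Subgroup G) (hG' : IsOpen (G' : Set G)) (n : ℕ) (hn : 1 ≤ n)
    (hBM : ∀ A B : Set G, IsCompact A → IsCompact B →
      A ⊆ (G' : Set G) → B ⊆ (G' : Set G) → 0 < μ A → 0 < μ B →
      μ A ^ ((1 : ℝ) / n) + μ B ^ ((1 : ℝ) / n) ≤ μ (A * B) ^ ((1 : ℝ) / n))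
    (X Y : Set G) (hX : IsCompact X) (hY : IsCompact Y)
    (hXpos : 0 < μ X) (hYpos : 0 < μ Y)
    (a1 b1 : ℝ≥0∞) (ha1 : ∀ q : G ⧸ G', μ (X ∩ QuotientGroup.mk ⁻¹' {q}) ≤ a1)
    (q1 : G ⧸ G') (hb1 : μ (Y⁻¹ ∩ QuotientGroup.mk ⁻¹' {q1}) = b1) (hb1pos : 0 < b1)
    (hcase : a1 * μ Y ≤ b1 * μ X) :
    μ X ^ ((1 : ℝ) / n) + μ Y ^ ((1 : ℝ) / n) ≤ μ (X * Y) ^ ((1 : ℝ) / n) := by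
  classical
  have hn0 : n ≠ 0 := by omega
  have hn0' : (n : ℝ) ≠ 0 := by exact_mod_cast hn0
  have hinvm : ∀ S : Set G, IsCompact S → μ S⁻¹ = μ S := fun S hS =>
    measure_inv_compact μ hS
  have hrpow_pow : ∀ x : ℝ≥0∞, (x ^ ((1 : ℝ) / n)) ^ (n : ℕ) = x := fun x => by
    rw [← ENNReal.rpow_natCast (x ^ ((1 : ℝ) / n)) n, ← ENNReal.rpow_mul, one_div,
      inv_mul_cancel₀ hn0', ENNReal.rpow_one]
  have hpow_rpow : ∀ x : ℝ≥0∞, (x ^ (n : ℕ)) ^ ((1 : ℝ) / n) = x := fun x => by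
    rw [← ENNReal.rpow_natCast x n, ← ENNReal.rpow_mul, mul_one_div,
      div_self hn0', ENNReal.rpow_one]
  haveI hdisc : DiscreteTopology (G ⧸ G') := QuotientGroup.discreteTopology hG'
  have hmk : Continuous (QuotientGroup.mk : G → G ⧸ G') := continuous_quotient_mk'
  set u : ℝ≥0∞ := μ X ^ ((1 : ℝ) / n) with hu
  set v : ℝ≥0∞ := μ Y ^ ((1 : ℝ) / n) with hv
  have hu0 : u ≠ 0 := by
    rw [hu]
    simp only [ne_eq, ENNReal.rpow_eq_zero_iff, not_or, not_and, not_lt]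
    constructor
    · intro h; exact absurd h hXpos.ne'
    · intro h; exact absurd h hX.measure_lt_top.ne
  have hufin : u ≠ ⊤ :=
    ENNReal.rpow_ne_top_of_nonneg (by positivity) hX.measure_lt_top.ne
  set g : G := q1.out with hg
  have hgq : (QuotientGroup.mk g : G ⧸ G') = q1 := QuotientGroup.out_eq' q1
  set P : Set G := Y⁻¹ ∩ QuotientGroup.mk ⁻¹' {q1} with hP
  have hPc : IsCompact P := hY.inv.inter_right (isClosed_singleton.preimage hmk)
  set W : Set G := g⁻¹ • P with hW
  have hWc : IsCompact W := hPc.smul _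
  have hWG : W ⊆ (G' : Set G) := by
    rintro w ⟨x, ⟨hxY, hxq⟩, rfl⟩
    have hmkx : (QuotientGroup.mk x : G ⧸ G') = q1 := hxq
    have : (QuotientGroup.mk g : G ⧸ G') = QuotientGroup.mk x := by rw [hgq, hmkx]
    have hmem : g⁻¹ * x ∈ G' := QuotientGroup.eq.mp this
    simpa [smul_eq_mul] using hmem
  set B : Set G := W⁻¹ with hB
  have hBc : IsCompact B := hWc.inv
  have hBG : B ⊆ (G' : Set G) := by
    intro x hx
    have hxW : x⁻¹ ∈ W := hx
    exact (G'.inv_mem_iff).1 (hWG hxW)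
  have hμB : μ B = b1 := by
    rw [hB, hinvm W hWc, hW, measure_smul μ g⁻¹ P, hP, hb1]
  have hBpos : 0 < μ B := by rw [hμB]; exact hb1pos
  have hsub : B * {g⁻¹} ⊆ Y := by
    intro z hz
    rw [Set.mul_singleton] at hz
    obtain ⟨x, hx, rfl⟩ := hz
    have hxW : x⁻¹ ∈ W := hx
    obtain ⟨p, hp, hpe⟩ := hxW
    have hpY : p⁻¹ ∈ Y := by
      have := hp.1
      rwa [Set.mem_inv] at this
    have hxg : x * g⁻¹ = p⁻¹ := by
      have h1 : g⁻¹ * p = x⁻¹ := by simpa [smul_eq_mul] using hpe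
      calc x * g⁻¹ = (g * x⁻¹)⁻¹ := by group
        _ = (g * (g⁻¹ * p))⁻¹ := by rw [h1]
        _ = p⁻¹ := by group
    show x * g⁻¹ ∈ Y
    rwa [hxg]
  have hkey : a1 ^ ((1 : ℝ) / n) * v ≤ b1 ^ ((1 : ℝ) / n) * u := by
    have h1 : (a1 * μ Y) ^ ((1 : ℝ) / n) ≤ (b1 * μ X) ^ ((1 : ℝ) / n) :=
      ENNReal.rpow_le_rpow hcase (by positivity)
    rwa [ENNReal.mul_rpow_of_nonneg _ _ (by positivity),
      ENNReal.mul_rpow_of_nonneg _ _ (by positivity)] at h1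
  have hcond : ∀ q : G ⧸ G',
      μ (X ∩ QuotientGroup.mk ⁻¹' {q}) ^ ((1 : ℝ) / n) * v ≤ μ B ^ ((1 : ℝ) / n) * u := by
    intro q
    calc μ (X ∩ QuotientGroup.mk ⁻¹' {q}) ^ ((1 : ℝ) / n) * v
        ≤ a1 ^ ((1 : ℝ) / n) * v :=
          mul_le_mul_left (ENNReal.rpow_le_rpow (ha1 q) (by positivity)) v
      _ ≤ b1 ^ ((1 : ℝ) / n) * u := hkey
      _ = μ B ^ ((1 : ℝ) / n) * u := by rw [hμB]
  have hcore := core μ G' hG' n hn hBM X hX B hBc hBG hBpos g⁻¹ u v hcond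
  have hXBY : X * B * {g⁻¹} ⊆ X * Y := by
    rw [mul_assoc]
    exact Set.mul_subset_mul subset_rfl hsub
  have hfin : (u + v) ^ n ≤ μ (X * Y) := by
    have h2 : μ X * (u + v) ^ n ≤ μ (X * Y) * u ^ n :=
      hcore.trans (mul_le_mul_left (measure_mono hXBY) _)
    have hXu : μ X = u ^ n := (hrpow_pow (μ X)).symm
    rw [hXu, mul_comm (u ^ n) ((u + v) ^ n)] at h2
    exact (ENNReal.mul_le_mul_iff_left (pow_ne_zero n hu0)
      (ENNReal.pow_ne_top hufin)).1 h2
  calc u + v = ((u + v) ^ (n : ℕ)) ^ ((1 : ℝ) / n) := (hpow_rpow _).symm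
    _ ≤ μ (X * Y) ^ ((1 : ℝ) / n) := ENNReal.rpow_le_rpow hfin (by positivity)

end Aux

/-- If a unimodular locally compact group `G` has an open subgroup `G'` satisfying the
Brunn–Minkowski inequality with exponent `n ≥ 1`, then `G` satisfies the Brunn–Minkowski
inequality with exponent `n`. -/
theorem stmt12 {G : Type*} [Group G] [TopologicalSpace G] [IsTopologicalGroup G]
    [LocallyCompactSpace G] [MeasurableSpace G] [BorelSpace G]
    (μ : Measure G) [μ.IsHaarMeasure] [μ.IsMulRightInvariant]
    (G' : Subgroup G) (hG' : IsOpen (G' : Set G))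
    (n : ℕ) (hn : 1 ≤ n)
    (hBM : ∀ A B : Set G, IsCompact A → IsCompact B →
      A ⊆ (G' : Set G) → B ⊆ (G' : Set G) → 0 < μ A → 0 < μ B →
      μ A ^ ((1 : ℝ) / n) + μ B ^ ((1 : ℝ) / n) ≤ μ (A * B) ^ ((1 : ℝ) / n)) :
    ∀ X Y : Set G, IsCompact X → IsCompact Y → 0 < μ X → 0 < μ Y →
      μ X ^ ((1 : ℝ) / n) + μ Y ^ ((1 : ℝ) / n) ≤ μ (X * Y) ^ ((1 : ℝ) / n) := by
  intro X Y hX hY hXpos hYpos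
  have hinvm : ∀ S : Set G, IsCompact S → μ S⁻¹ = μ S := fun S hS =>
    measure_inv_compact μ hS
  have hYinv : 0 < μ Y⁻¹ := by rw [hinvm Y hY]; exact hYpos
  have hXinv : 0 < μ X⁻¹ := by rw [hinvm X hX]; exact hXpos
  obtain ⟨cX, qX, hXb, hXeq, hXc⟩ := piece_facts μ G' hG' X hX hXpos
  obtain ⟨cY, qY, hYb, hYeq, hYc⟩ := piece_facts μ G' hG' Y⁻¹ hY.inv hYinv
  by_cases hc : cX * μ Y ≤ cY * μ X
  · exact half μ G' hG' n hn hBM X Y hX hY hXpos hYpos cX cY hXb qY hYeq hYc hc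
  · have hc' : cY * μ X⁻¹ ≤ cX * μ Y⁻¹ := by
      rw [hinvm X hX, hinvm Y hY]
      exact (not_le.mp hc).le
    have hXinvinv : μ ((X⁻¹)⁻¹ ∩ QuotientGroup.mk ⁻¹' {qX}) = cX := by
      rw [inv_inv]; exact hXeq
    have h2 := half μ G' hG' n hn hBM Y⁻¹ X⁻¹ hY.inv hX.inv hYinv hXinv cY cX hYb qX
      hXinvinv hXc hc'
    rw [show Y⁻¹ * X⁻¹ = (X * Y)⁻¹ from (mul_inv_rev X Y).symm,
      hinvm _ (hX.mul hY), hinvm Y hY, hinvm X hX, add_comm] at h2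
    exact h2
end

section
/- Let G be a locally compact group and π : G → (ℝ>0, ×) a continuous group homomorphism. Then exactly one of the following holds: (1) π is a surjective open map, so that 1 → ker π → G → ℝ>0 → 1 is a short exact sequence of topological groups; or (2) ker π is an open subgroup of G. -/
open scoped Pointwise Topology

/-- Power rule for an abstract "additive-valued" map on a group. -/
lemma stmt15_fpow {Q : Type*} [Group Q] (f : Q → ℝ)
    (hmul : ∀ a b, f (a * b) = f a + f b) (g : Q) :
    ∀ n : ℕ, f (g ^ n) = n * f g := by
  have h1 : f 1 = 0 := by
    have := hmul 1 1; simpa using this.symm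
  intro n
  induction n with
  | zero => simpa using h1
  | succ n ih =>
    rw [pow_succ, hmul, ih]
    push_cast
    ring

lemma stmt15_finv {Q : Type*} [Group Q] (f : Q → ℝ)
    (hmul : ∀ a b, f (a * b) = f a + f b) (g : Q) :
    f g⁻¹ = - f g := by
  have h1 : f 1 = 0 := by
    have := hmul 1 1; simpa using this.symm
  have := hmul g⁻¹ g
  simp only [inv_mul_cancel, h1] at this
  linarith

/-- Key lemma: if `f : Q → ℝ` is a continuous injective homomorphism-like map on a
nondiscrete topological group, then the image of any symmetric compact neighborhood of `1`
contains an interval around `0`. -/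
lemma stmt15_key {Q : Type*} [Group Q] [TopologicalSpace Q] [IsTopologicalGroup Q]
    (f : Q → ℝ) (hf : Continuous f) (hmul : ∀ a b, f (a * b) = f a + f b)
    (hinj : ∀ q, f q = 0 → q = 1)
    (hnd : ∀ V ∈ 𝓝 (1 : Q), ∃ q ∈ V, q ≠ 1)
    {K : Set Q} (hKc : IsCompact K) (hKs : K⁻¹ = K) (hKn : K ∈ 𝓝 1) :
    ∃ ε > 0, Set.Icc (-ε) ε ⊆ f '' K := by
  classical
  have h1 : f 1 = 0 := by
    have := hmul 1 1; simpa using this.symm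
  have h1K : (1 : Q) ∈ K := mem_of_mem_nhds hKn
  have h1int : (1 : Q) ∈ interior K := mem_interior_iff_mem_nhds.2 hKn
  -- the compact "annulus"
  set W : Set Q := (K * K) \ interior K with hW_def
  have hWc : IsCompact W := (hKc.mul hKc).diff isOpen_interior
  -- a positive lower bound for |f| on W
  obtain ⟨ε₀, hε₀_pos, hε₀⟩ : ∃ ε₀ > 0, ∀ w ∈ W, ε₀ ≤ |f w| := by
    by_cases hWe : W.Nonempty
    · obtain ⟨w₀, hw₀W, hmin⟩ :=
        hWc.exists_isMinOn hWe ((continuous_abs.comp hf).continuousOn)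
      refine ⟨|f w₀|, ?_, fun w hw => hmin hw⟩
      rcases (abs_nonneg (f w₀)).lt_or_eq with h | h
      · exact h
      · exfalso
        have : f w₀ = 0 := by
          have := abs_eq_zero.mp h.symm; exact this
        have : w₀ = 1 := hinj _ this
        rw [this] at hw₀W
        exact hw₀W.2 h1int
    · exact ⟨1, one_pos, fun w hw => absurd ⟨w, hw⟩ hWe⟩
  set ε : ℝ := ε₀ / 2 with hε_def
  have hε_pos : 0 < ε := by positivity
  have hεε₀ : ε < ε₀ := by simp [hε_def]; linarith
  -- main claim: every x ∈ [0, ε] is a value of f on K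
  have main : ∀ x ∈ Set.Icc (0 : ℝ) ε, x ∈ f '' K := by
    rintro x ⟨hx0, hxε⟩
    rcases hx0.lt_or_eq with hx_pos | hx0'
    · -- x > 0 : show x ∈ closure (f '' K) = f '' K
      have hcl : IsClosed (f '' K) := (hKc.image hf).isClosed
      rw [← hcl.closure_eq]
      rw [Metric.mem_closure_iff]
      intro δ hδ
      -- pick a small positive element
      obtain ⟨g, hgK, ht_pos, ht_lt⟩ :
          ∃ g ∈ K, 0 < f g ∧ f g < min δ x := by
        have hball : f ⁻¹' Metric.ball 0 (min δ x) ∈ 𝓝 (1 : Q) := by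
          apply hf.continuousAt.preimage_mem_nhds
          rw [h1]
          exact Metric.ball_mem_nhds 0 (lt_min hδ hx_pos)
        obtain ⟨g, hg, hgne⟩ := hnd _ (Filter.inter_mem hKn hball)
        have hgfne : f g ≠ 0 := fun h => hgne (hinj _ h)
        have hgabs : |f g| < min δ x := by
          have := hg.2
          simpa [Real.dist_eq] using this
        rcases hgfne.lt_or_gt with hlt | hgt
        · refine ⟨g⁻¹, ?_, ?_, ?_⟩
          · rw [← hKs]; exact Set.inv_mem_inv.mpr hg.1
          · rw [stmt15_finv f hmul]; linarith
          · rw [stmt15_finv f hmul]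
            calc -f g ≤ |f g| := neg_le_abs _
            _ < min δ x := hgabs
        · exact ⟨g, hg.1, hgt, (le_abs_self _).trans_lt hgabs⟩
      set t : ℝ := f g with ht_def
      -- the predicate of "staying in K with value ≤ x"
      set P : ℕ → Prop := fun m => ((m : ℝ) * t ≤ x ∧ ∀ k ≤ m, g ^ k ∈ K) with hP_def
      have hP0 : P 0 := by
        constructor
        · simp [hx0]
        · intro k hk; interval_cases k; simpa using h1K
      have hPbad : ∃ m, ¬ P m := by
        obtain ⟨n, hn⟩ := exists_nat_gt (x / t)
        refine ⟨n, fun hPn => ?_⟩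
        have : (n : ℝ) * t > x := by
          rw [div_lt_iff₀ ht_pos] at hn; linarith
        linarith [hPn.1]
      set N := Nat.find hPbad with hN_def
      have hspec : ¬ P N := Nat.find_spec hPbad
      have hNne : N ≠ 0 := by
        intro h
        rw [h] at hspec; exact hspec hP0
      obtain ⟨m, hm⟩ : ∃ m, N = m + 1 := ⟨N - 1, (Nat.succ_pred_eq_of_ne_zero hNne).symm⟩
      have hPm : P m := by
        by_contra h
        have : N ≤ m := Nat.find_le h
        omega
      have hPm1 : ¬ P (m + 1) := by rw [← hm]; exact hspec
      by_cases hle : ((m : ℝ) + 1) * t ≤ x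
      · -- exit case: impossible
        exfalso
        have hnotall : ¬ ∀ k ≤ m + 1, g ^ k ∈ K := by
          intro hall
          exact hPm1 ⟨by push_cast; linarith, hall⟩
        have hq_not : g ^ (m + 1) ∉ K := by
          intro hmem
          apply hnotall
          intro k hk
          rcases Nat.lt_or_ge k (m + 1) with hlt | hge
          · exact hPm.2 k (Nat.lt_succ_iff.mp hlt)
          · have : k = m + 1 := le_antisymm hk hge
            rwa [this]
        have hq_mem : g ^ (m + 1) ∈ K * K := by
          rw [pow_succ]
          exact Set.mul_mem_mul (hPm.2 m le_rfl) hgK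
        have hqW : g ^ (m + 1) ∈ W := ⟨hq_mem, fun h => hq_not (interior_subset h)⟩
        have hval : f (g ^ (m + 1)) = ((m : ℝ) + 1) * t := by
          rw [stmt15_fpow f hmul]; push_cast; ring
        have := hε₀ _ hqW
        rw [hval, abs_of_pos (by positivity)] at this
        linarith
      · -- approximation case
        push_neg at hle
        refine ⟨f (g ^ m), ⟨g ^ m, hPm.2 m le_rfl, rfl⟩, ?_⟩
        rw [stmt15_fpow f hmul, Real.dist_eq]
        have h1' : (m : ℝ) * t ≤ x := hPm.1
        have h2' : x - (m : ℝ) * t < t := by linarith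
        rw [abs_of_nonneg (by linarith)]
        have : t < δ := ht_lt.trans_le (min_le_left _ _)
        linarith
    · -- x = 0
      exact ⟨1, h1K, by rw [h1, hx0']⟩
  refine ⟨ε, hε_pos, ?_⟩
  rintro x ⟨hx1, hx2⟩
  rcases le_or_gt 0 x with hx0 | hx0
  · exact main x ⟨hx0, hx2⟩
  · obtain ⟨k, hkK, hk⟩ := main (-x) ⟨by linarith, by linarith⟩
    refine ⟨k⁻¹, ?_, ?_⟩
    · rw [← hKs]; exact Set.inv_mem_inv.mpr hkK
    · rw [stmt15_finv f hmul, hk]; ring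

/-- In a locally compact Hausdorff topological group, every neighborhood of `1` contains a
compact symmetric neighborhood of `1`. -/
lemma stmt15_symm_nhds {Q : Type*} [Group Q] [TopologicalSpace Q] [IsTopologicalGroup Q]
    [LocallyCompactSpace Q] [T2Space Q] {V : Set Q} (hV : V ∈ 𝓝 1) :
    ∃ K : Set Q, IsCompact K ∧ K⁻¹ = K ∧ K ∈ 𝓝 1 ∧ K ⊆ V := by
  obtain ⟨K₀, hK₀n, hK₀V, hK₀c⟩ := LocallyCompactSpace.local_compact_nhds (1 : Q) V hV
  refine ⟨K₀ ∩ K₀⁻¹, hK₀c.inter_right hK₀c.inv.isClosed, ?_, ?_, fun q hq => hK₀V hq.1⟩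
  · rw [Set.inter_inv, inv_inv, Set.inter_comm]
  · exact Filter.inter_mem hK₀n (inv_mem_nhds_one Q hK₀n)

/-- Dichotomy: for a continuous homomorphism `π : G → (ℝ>0, ×)` from a locally compact
group, exactly one of the following holds: `π` is a surjective open map (so it is a
quotient map of topological groups), or `ker π` is an open subgroup of `G`. -/
theorem stmt15 {G : Type*} [Group G] [TopologicalSpace G] [IsTopologicalGroup G]
    [LocallyCompactSpace G]
    (π : G →* {x : ℝ // 0 < x}) (hπ : Continuous π) :
    Xor' (Function.Surjective π ∧ IsOpenMap π) (IsOpen ((π.ker : Subgroup G) : Set G)) := by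
  by_cases hker : IsOpen ((π.ker : Subgroup G) : Set G)
  · -- kernel open ⇒ π is not an open map
    refine Or.inr ⟨hker, ?_⟩
    rintro ⟨hsurj, hopen⟩
    have h1 : IsOpen (π '' (π.ker : Set G)) := hopen _ hker
    have him : π '' (π.ker : Set G) = {1} := by
      apply Set.eq_singleton_iff_unique_mem.mpr
      constructor
      · exact ⟨1, one_mem _, map_one π⟩
      · rintro y ⟨g, hg, rfl⟩
        exact hg
    rw [him] at h1
    -- but {1} is not open in ℝ>0
    have hexp : Continuous (fun t : ℝ => (⟨Real.exp t, Real.exp_pos t⟩ : {x : ℝ // 0 < x})) :=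
      Real.continuous_exp.subtype_mk _
    have hpre : IsOpen ((fun t : ℝ => (⟨Real.exp t, Real.exp_pos t⟩ : {x : ℝ // 0 < x})) ⁻¹'
        {1}) := h1.preimage hexp
    have hpre_eq : ((fun t : ℝ => (⟨Real.exp t, Real.exp_pos t⟩ : {x : ℝ // 0 < x})) ⁻¹'
        {1}) = {0} := by
      ext t
      simp only [Set.mem_preimage, Set.mem_singleton_iff]
      constructor
      · intro h
        have : Real.exp t = 1 := congrArg Subtype.val h
        rwa [Real.exp_eq_one_iff] at this
      · rintro rfl
        exact Subtype.ext (by simp)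
    rw [hpre_eq] at hpre
    obtain ⟨r, hr, hball⟩ := Metric.isOpen_iff.mp hpre 0 rfl
    have hmem : r / 2 ∈ Metric.ball (0 : ℝ) r := by
      rw [Metric.mem_ball, Real.dist_eq, sub_zero, abs_of_pos (by linarith)]
      linarith
    have := hball hmem
    rw [Set.mem_singleton_iff] at this
    linarith
  · -- kernel not open ⇒ π is a surjective open map
    -- common setup
    have hker_closed : IsClosed ((π.ker : Subgroup G) : Set G) := by
      have : ((π.ker : Subgroup G) : Set G) = π ⁻¹' {1} := by
        ext g; simp [MonoidHom.mem_ker]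
      rw [this]
      exact isClosed_singleton.preimage hπ
    haveI : IsClosed ((π.ker : Subgroup G) : Set G) := hker_closed
    set j : G ⧸ π.ker →* {x : ℝ // 0 < x} := QuotientGroup.kerLift π with hj_def
    have hjcont : Continuous j := by
      rw [(QuotientGroup.isQuotientMap_mk π.ker).continuous_iff]
      have : (j : G ⧸ π.ker → {x : ℝ // 0 < x}) ∘ QuotientGroup.mk = π :=
        funext fun g => QuotientGroup.kerLift_mk π g
      rw [this]
      exact hπ
    set f : G ⧸ π.ker → ℝ := fun q => Real.log ((j q : ℝ)) with hf_def
    have hval_cont : Continuous (fun q : G ⧸ π.ker => ((j q : ℝ))) :=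
      continuous_subtype_val.comp hjcont
    have hf : Continuous f :=
      Real.continuousOn_log.comp_continuous hval_cont
        (fun q => Set.mem_compl_singleton_iff.mpr (ne_of_gt (j q).2))
    have hmul : ∀ a b, f (a * b) = f a + f b := by
      intro a b
      simp only [hf_def, map_mul]
      rw [Positive.val_mul, Real.log_mul (ne_of_gt (j a).2) (ne_of_gt (j b).2)]
    have hinj : ∀ q, f q = 0 → q = 1 := by
      intro q hq
      have hpos := (j q).2
      have hq' : Real.log ((j q : ℝ)) = 0 := hq
      have : ((j q : ℝ)) = 1 := by
        have := Real.exp_log hpos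
        rw [hq', Real.exp_zero] at this
        exact this.symm
      have hjq : j q = 1 := Subtype.ext (by simpa using this)
      exact QuotientGroup.kerLift_injective π (by rw [hjq, map_one])
    have hnd : ∀ V ∈ 𝓝 (1 : G ⧸ π.ker), ∃ q ∈ V, q ≠ 1 := by
      intro V hV
      have hU : (QuotientGroup.mk : G → G ⧸ π.ker) ⁻¹' V ∈ 𝓝 (1 : G) := by
        have := QuotientGroup.continuous_mk (N := π.ker).continuousAt (x := (1 : G))
        apply this.preimage_mem_nhds
        rwa [QuotientGroup.mk_one]
      have hnot : ¬ ((QuotientGroup.mk : G → G ⧸ π.ker) ⁻¹' V ⊆ (π.ker : Set G)) := by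
        intro hsub
        exact hker (Subgroup.isOpen_of_mem_nhds _ (Filter.mem_of_superset hU hsub))
      obtain ⟨g, hgV, hgker⟩ := Set.not_subset.mp hnot
      refine ⟨QuotientGroup.mk g, hgV, ?_⟩
      rwa [Ne, QuotientGroup.eq_one_iff]
    -- value identity linking f and π
    have hval_eq : ∀ (q : G ⧸ π.ker) (y : {x : ℝ // 0 < x}),
        f q = Real.log (y : ℝ) → j q = y := by
      intro q y h
      apply Subtype.ext
      have h' : Real.log ((j q : ℝ)) = Real.log ((y : ℝ)) := h
      have h1 := Real.exp_log (j q).2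
      have h2 := Real.exp_log y.2
      rw [← h1, ← h2, h']
    refine Or.inl ⟨⟨?_, ?_⟩, hker⟩
    -- surjectivity
    · intro y
      obtain ⟨K, hKc, hKs, hKn, _⟩ :=
        stmt15_symm_nhds (Q := G ⧸ π.ker) (V := Set.univ) Filter.univ_mem
      obtain ⟨ε, hε_pos, hsub⟩ := stmt15_key f hf hmul hinj hnd hKc hKs hKn
      set x : ℝ := Real.log (y : ℝ) with hx_def
      obtain ⟨n, hn⟩ := exists_nat_ge (|x| / ε)
      have hn1 : (0 : ℝ) < n + 1 := by positivity
      have hmem : x / (n + 1) ∈ Set.Icc (-ε) ε := by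
        rw [Set.mem_Icc]
        have habs : |x| ≤ (n + 1) * ε := by
          rw [div_le_iff₀ hε_pos] at hn
          nlinarith
        constructor
        · rw [neg_le, ← neg_div]
          rw [div_le_iff₀ hn1]
          calc -x ≤ |x| := neg_le_abs x
          _ ≤ (n+1) * ε := habs
          _ = ε * (n+1) := by ring
        · rw [div_le_iff₀ hn1]
          calc x ≤ |x| := le_abs_self x
          _ ≤ (n+1) * ε := habs
          _ = ε * (n+1) := by ring
      obtain ⟨k, hkK, hk⟩ := hsub hmem
      have hfk : f (k ^ (n + 1)) = x := by
        rw [stmt15_fpow f hmul, hk]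
        push_cast
        field_simp
      have hjk : j (k ^ (n + 1)) = y := hval_eq _ _ hfk
      obtain ⟨g, hg⟩ := QuotientGroup.mk_surjective (k ^ (n + 1))
      refine ⟨g, ?_⟩
      calc π g = j (QuotientGroup.mk g) := (QuotientGroup.kerLift_mk π g).symm
      _ = y := by rw [hg]; exact hjk
    -- openness
    · have hjopen : IsOpenMap (j : G ⧸ π.ker → {x : ℝ // 0 < x}) := by
        intro V hV
        rw [isOpen_iff_mem_nhds]
        rintro y ⟨q, hqV, rfl⟩
        have hV' : (fun z => q * z) ⁻¹' V ∈ 𝓝 (1 : G ⧸ π.ker) := by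
          apply (continuous_mul_left q).continuousAt.preimage_mem_nhds
          rw [mul_one]
          exact hV.mem_nhds hqV
        obtain ⟨K, hKc, hKs, hKn, hKV⟩ := stmt15_symm_nhds hV'
        obtain ⟨ε, hε_pos, hsub⟩ := stmt15_key f hf hmul hinj hnd hKc hKs hKn
        set S : Set {x : ℝ // 0 < x} :=
          (fun z : {x : ℝ // 0 < x} => Real.log (z : ℝ)) ⁻¹' Metric.ball (f q) ε with hS_def
        have hlog_cont : Continuous (fun z : {x : ℝ // 0 < x} => Real.log (z : ℝ)) :=
          Real.continuousOn_log.comp_continuous continuous_subtype_val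
            (fun z => Set.mem_compl_singleton_iff.mpr (ne_of_gt z.2))
        have hS_open : IsOpen S := Metric.isOpen_ball.preimage hlog_cont
        have hyS : j q ∈ S := by
          simp only [hS_def, Set.mem_preimage, Metric.mem_ball]
          have heq : Real.log ((j q : ℝ)) = f q := rfl
          rw [heq, dist_self]
          exact hε_pos
        refine Filter.mem_of_superset (hS_open.mem_nhds hyS) ?_
        intro z hz
        have hz' : |Real.log (z : ℝ) - f q| < ε := by
          simpa [hS_def, Real.dist_eq] using hz
        have hmem : Real.log (z : ℝ) - f q ∈ Set.Icc (-ε) ε := by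
          rw [Set.mem_Icc, ← abs_le]
          exact hz'.le
        obtain ⟨k, hkK, hk⟩ := hsub hmem
        have hfqk : f (q * k) = Real.log (z : ℝ) := by
          rw [hmul, hk]; ring
        exact ⟨q * k, hKV hkK, hval_eq _ _ hfqk⟩
      have hcomp : ⇑π = (j : G ⧸ π.ker → {x : ℝ // 0 < x}) ∘
          (QuotientGroup.mk : G → G ⧸ π.ker) :=
        funext fun g => (QuotientGroup.kerLift_mk π g).symm
      rw [hcomp]
      exact hjopen.comp QuotientGroup.isOpenMap_coe
end

section
/- Let G be a locally compact group, G' an open normal subgroup of G which is unimodular with Haar measure μ_{G'}, and suppose G' satisfies the Brunn–Minkowski inequality with exponent n ≥ 1: μ_{G'}(AB)^{1/n} ≥ μ_{G'}(A)^{1/n} + μ_{G'}(B)^{1/n} for all compact A, B ⊆ G' of positive measure. Then G satisfies the two-sided Brunn–Minkowski inequality with exponent n: for a left Haar measure μ and right Haar measure ν on G and all compact X, Y ⊆ G of positive measure, (ν(X)/ν(XY))^{1/n} + (μ(Y)/μ(XY))^{1/n} ≤ 1. -/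
open MeasureTheory Pointwise
open scoped ENNReal NNReal



section auxuniq

variable {H : Type*} [Group H] [TopologicalSpace H] [IsTopologicalGroup H]
  [LocallyCompactSpace H] [MeasurableSpace H] [BorelSpace H]

lemma aux_left_unique (ρ μH : Measure H) [μH.IsHaarMeasure]
    [ρ.IsMulLeftInvariant] [IsFiniteMeasureOnCompacts ρ] :
    ∃ c : ℝ≥0, ∀ s : Set H, IsCompact (closure s) → ρ s = c * μH s := by
  exact ⟨Measure.haarScalarFactor ρ μH, fun s hs =>
    Measure.measure_isMulInvariant_eq_smul_of_isCompact_closure ρ μH hs⟩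

lemma aux_right_unique (ρ μH : Measure H) [μH.IsHaarMeasure] [μH.IsMulRightInvariant]
    [ρ.IsMulRightInvariant] [IsFiniteMeasureOnCompacts ρ] :
    ∃ c : ℝ≥0, ∀ s : Set H, IsCompact (closure s) → ρ s = c * μH s := by
  haveI : (μH.inv).IsHaarMeasure := ⟨⟩
  refine ⟨Measure.haarScalarFactor ρ.inv μH.inv, fun s hs => ?_⟩
  have hcl : IsCompact (closure s⁻¹) := by
    rw [← inv_closure]; exact hs.inv
  have h1 : ρ.inv s⁻¹ = Measure.haarScalarFactor ρ.inv μH.inv • μH.inv s⁻¹ :=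
    Measure.measure_isMulInvariant_eq_smul_of_isCompact_closure ρ.inv μH.inv hcl
  simpa [Measure.inv_apply] using h1

end auxuniq

section auxcomap

variable {G : Type*} [Group G] [TopologicalSpace G] [IsTopologicalGroup G]
  [LocallyCompactSpace G] [MeasurableSpace G] [BorelSpace G]

lemma aux_emb_nu (G' : Subgroup G) (hO : IsOpen (G' : Set G)) (a : G) :
    Topology.IsClosedEmbedding (fun x : G' => a * (x : G)) := by
  have h1 : Topology.IsClosedEmbedding ((↑) : G' → G) :=
    Topology.IsClosedEmbedding.subtypeVal (G'.isClosed_of_isOpen hO)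
  exact (Homeomorph.mulLeft a).isClosedEmbedding.comp h1

lemma aux_emb_mu (G' : Subgroup G) (hO : IsOpen (G' : Set G)) (b : G) :
    Topology.IsClosedEmbedding (fun y : G' => (y : G) * b) := by
  have h1 : Topology.IsClosedEmbedding ((↑) : G' → G) :=
    Topology.IsClosedEmbedding.subtypeVal (G'.isClosed_of_isOpen hO)
  exact (Homeomorph.mulRight b).isClosedEmbedding.comp h1

lemma aux_nu_side (G' : Subgroup G) (hO : IsOpen (G' : Set G))
    (μG' : Measure G') [μG'.IsHaarMeasure] [μG'.IsMulRightInvariant]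
    (ν : Measure G) [ν.IsMulRightInvariant] [IsFiniteMeasureOnCompacts ν]
    (a : G) :
    ∃ c : ℝ≥0, ∀ s : Set G', IsCompact (closure s) →
      ν ((fun x : G' => a * (x : G)) '' s) = c * μG' s := by
  haveI : LocallyCompactSpace G' := hO.isLocallyClosed.locallyCompactSpace
  haveI : BorelSpace G' := Subtype.borelSpace (G' : Set G)
  set f : G' → G := fun x : G' => a * (x : G) with hf
  have hemb : MeasurableEmbedding f := (aux_emb_nu G' hO a).measurableEmbedding
  set ρ : Measure G' := ν.comap f with hρdef
  have hρ : ∀ s : Set G', ρ s = ν (f '' s) := fun s => hemb.comap_apply ν s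
  haveI : IsFiniteMeasureOnCompacts ρ := by
    constructor
    intro K hK
    rw [hρ]
    exact (hK.image (aux_emb_nu G' hO a).continuous).measure_lt_top
  haveI : ρ.IsMulRightInvariant := by
    constructor
    intro g
    ext s hs
    rw [Measure.map_apply (measurable_mul_const g) hs, hρ, hρ]
    have himg : f '' ((fun x => x * g) ⁻¹' s) = (fun y => y * (g : G)) ⁻¹' (f '' s) := by
      ext y
      constructor
      · rintro ⟨x, hx, rfl⟩
        refine ⟨x * g, hx, ?_⟩
        simp [hf, mul_assoc]
      · rintro ⟨z, hz, hzy⟩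
        simp only [hf] at hzy
        refine ⟨z * g⁻¹, by simpa using hz, ?_⟩
        have h2 : y = a * (z : G) * ((g : G))⁻¹ := eq_mul_inv_iff_mul_eq.2 hzy.symm
        simp only [hf]
        push_cast
        rw [h2, mul_assoc]
    rw [himg, measure_preimage_mul_right ν (g : G) (f '' s)]
  obtain ⟨c, hc⟩ := aux_right_unique ρ μG'
  exact ⟨c, fun s hs => by rw [← hρ s, hc s hs]⟩

lemma aux_mu_side (G' : Subgroup G) (hO : IsOpen (G' : Set G))
    (μG' : Measure G') [μG'.IsHaarMeasure] [μG'.IsMulRightInvariant]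
    (μ : Measure G) [μ.IsMulLeftInvariant] [IsFiniteMeasureOnCompacts μ]
    (b : G) :
    ∃ c : ℝ≥0, ∀ s : Set G', IsCompact (closure s) →
      μ ((fun y : G' => (y : G) * b) '' s) = c * μG' s := by
  haveI : LocallyCompactSpace G' := hO.isLocallyClosed.locallyCompactSpace
  haveI : BorelSpace G' := Subtype.borelSpace (G' : Set G)
  set f : G' → G := fun y : G' => (y : G) * b with hf
  have hemb : MeasurableEmbedding f := (aux_emb_mu G' hO b).measurableEmbedding
  set ρ : Measure G' := μ.comap f with hρdef
  have hρ : ∀ s : Set G', ρ s = μ (f '' s) := fun s => hemb.comap_apply μ s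
  haveI : IsFiniteMeasureOnCompacts ρ := by
    constructor
    intro K hK
    rw [hρ]
    exact (hK.image (aux_emb_mu G' hO b).continuous).measure_lt_top
  haveI : ρ.IsMulLeftInvariant := by
    constructor
    intro g
    ext s hs
    rw [Measure.map_apply (measurable_const_mul g) hs, hρ, hρ]
    have himg : f '' ((fun x => g * x) ⁻¹' s) = (fun z => (g : G) * z) ⁻¹' (f '' s) := by
      ext y
      constructor
      · rintro ⟨x, hx, rfl⟩
        exact ⟨g * x, hx, by simp [hf, mul_assoc]⟩
      · rintro ⟨z, hz, hzy⟩
        simp only [hf] at hzy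
        refine ⟨g⁻¹ * z, by simpa using hz, ?_⟩
        have h2 : y = ((g : G))⁻¹ * ((z : G) * b) := eq_inv_mul_iff_mul_eq.2 hzy.symm
        simp only [hf]
        push_cast
        rw [h2, mul_assoc]
    rw [himg, measure_preimage_mul μ (g : G) (f '' s)]
  obtain ⟨c, hc⟩ := aux_left_unique ρ μG'
  exact ⟨c, fun s hs => by rw [← hρ s, hc s hs]⟩

end auxcomap

/-- Finitely many pairwise disjoint measurable pieces of `Z` have total measure at most `μ Z`. -/
lemma aux_sum {α ι : Type*} [MeasurableSpace α] (μ : Measure α) (Z : Set α)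
    (S : Finset ι) (C : ι → Set α) (hC : ∀ i, MeasurableSet (C i))
    (hd : ∀ i ∈ S, ∀ j ∈ S, i ≠ j → Disjoint (C i) (C j)) :
    ∑ i ∈ S, μ (Z ∩ C i) ≤ μ Z := by
  classical
  induction S using Finset.induction_on generalizing Z with
  | empty => simp
  | @insert i S hiS ih =>
      rw [Finset.sum_insert hiS]
      have h1 : μ (Z ∩ C i) + μ (Z \ C i) = μ Z := measure_inter_add_diff Z (hC i)
      have h2 : ∑ j ∈ S, μ (Z ∩ C j) = ∑ j ∈ S, μ ((Z \ C i) ∩ C j) := by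
        refine Finset.sum_congr rfl fun j hj => ?_
        have hdij : Disjoint (C i) (C j) :=
          hd i (Finset.mem_insert_self i S) j (Finset.mem_insert_of_mem hj)
            (fun h => hiS (h ▸ hj))
        congr 1
        ext x
        simp only [Set.mem_inter_iff, Set.mem_diff]
        exact ⟨fun ⟨hx, hxj⟩ => ⟨⟨hx, fun hxi => hdij.ne_of_mem hxi hxj rfl⟩, hxj⟩,
          fun ⟨⟨hx, _⟩, hxj⟩ => ⟨hx, hxj⟩⟩
      rw [h2]
      calc μ (Z ∩ C i) + ∑ j ∈ S, μ ((Z \ C i) ∩ C j)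
          ≤ μ (Z ∩ C i) + μ (Z \ C i) := by
            gcongr
            exact ih (Z \ C i) fun a ha b hb hab =>
              hd a (Finset.mem_insert_of_mem ha) b (Finset.mem_insert_of_mem hb) hab
        _ = μ Z := h1

/-- Core scalar inequality. -/
lemma aux_core {u v w : ℝ≥0∞} (h : u ≤ v) : u * (v + w) ≤ v * (u + w) := by
  rw [mul_add, mul_add, mul_comm u v]
  exact add_le_add le_rfl (mul_le_mul_left h w)

section auxcoset

variable {G : Type*} [Group G] (G' : Subgroup G)

lemma aux_coset_nu (a : G) :
    (QuotientGroup.mk ⁻¹' {(QuotientGroup.mk a : G ⧸ G')} : Set G)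
      = Set.range (fun x : G' => a * (x : G)) := by
  ext x
  simp only [Set.mem_preimage, Set.mem_singleton_iff, Set.mem_range]
  constructor
  · intro h
    have : a⁻¹ * x ∈ G' := QuotientGroup.eq.1 h.symm
    exact ⟨⟨a⁻¹ * x, this⟩, by simp⟩
  · rintro ⟨h, rfl⟩
    symm
    rw [QuotientGroup.eq]
    simpa using h.2

lemma aux_coset_mu [G'.Normal] (b : G) :
    (QuotientGroup.mk ⁻¹' {(QuotientGroup.mk b : G ⧸ G')} : Set G)
      = Set.range (fun y : G' => (y : G) * b) := by
  ext x
  simp only [Set.mem_preimage, Set.mem_singleton_iff, Set.mem_range]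
  constructor
  · intro h
    have h1 : x⁻¹ * b ∈ G' := QuotientGroup.eq.1 h
    have h2 : b⁻¹ * x ∈ G' := by simpa using inv_mem h1
    have h3 : b * (b⁻¹ * x) * b⁻¹ ∈ G' := Subgroup.Normal.conj_mem ‹G'.Normal› _ h2 b
    refine ⟨⟨x * b⁻¹, by simpa [mul_assoc] using h3⟩, by simp⟩
  · rintro ⟨h, rfl⟩
    rw [QuotientGroup.eq]
    have h3 : b⁻¹ * (h : G)⁻¹ * (b⁻¹)⁻¹ ∈ G' :=
      Subgroup.Normal.conj_mem ‹G'.Normal› _ (inv_mem h.2) b⁻¹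
    simpa [mul_assoc] using h3

lemma aux_range_eq (a : G) :
    Set.range (fun x : G' => a * (x : G)) = (fun g => a * g) '' (G' : Set G) := by
  ext x
  constructor
  · rintro ⟨h, rfl⟩
    exact ⟨↑h, h.2, rfl⟩
  · rintro ⟨g, hg, rfl⟩
    exact ⟨⟨g, hg⟩, rfl⟩

lemma aux_coset_open [TopologicalSpace G] [ContinuousMul G] (hO : IsOpen (G' : Set G))
    (q : G ⧸ G') : IsOpen (QuotientGroup.mk ⁻¹' {q} : Set G) := by
  have hq : (QuotientGroup.mk q.out : G ⧸ G') = q := QuotientGroup.out_eq' q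
  rw [← hq, aux_coset_nu, aux_range_eq]
  exact (Homeomorph.mulLeft q.out).isOpenMap _ hO

/-- The central product decomposition. -/
lemma aux_prod_decomp [G'.Normal] (X Y : Set G) (q r : G ⧸ G') :
    (X ∩ QuotientGroup.mk ⁻¹' {q}) * (Y ∩ QuotientGroup.mk ⁻¹' {r})
      = {q.out} * ((Subtype.val '' ((fun x : G' => q.out * (x : G)) ⁻¹' X
            * (fun y : G' => (y : G) * r.out) ⁻¹' Y)) * {r.out}) := by
  have hq : (QuotientGroup.mk q.out : G ⧸ G') = q := QuotientGroup.out_eq' q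
  have hr : (QuotientGroup.mk r.out : G ⧸ G') = r := QuotientGroup.out_eq' r
  set a := q.out
  set b := r.out
  set A : Set G' := (fun x : G' => a * (x : G)) ⁻¹' X
  set B : Set G' := (fun y : G' => (y : G) * b) ⁻¹' Y
  have hX1 : X ∩ QuotientGroup.mk ⁻¹' {q} = (fun x : G' => a * (x : G)) '' A := by
    rw [Set.image_preimage_eq_inter_range, ← aux_coset_nu, hq]
  have hY1 : Y ∩ QuotientGroup.mk ⁻¹' {r} = (fun y : G' => (y : G) * b) '' B := by
    rw [Set.image_preimage_eq_inter_range, ← aux_coset_mu, hr]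
  have hfa : ∀ s : Set G', (fun x : G' => a * (x : G)) '' s = {a} * (Subtype.val '' s) := by
    intro s
    rw [Set.singleton_mul, ← Set.image_comp]
    rfl
  have hgb : ∀ s : Set G', (fun y : G' => (y : G) * b) '' s = (Subtype.val '' s) * {b} := by
    intro s
    rw [Set.mul_singleton, ← Set.image_comp]
    rfl
  have hval : (Subtype.val '' (A * B) : Set G) = Subtype.val '' A * Subtype.val '' B := by
    have := Set.image_mul (G'.subtype) (s := A) (t := B)
    simpa using this
  rw [hX1, hY1, hfa, hgb, hval]
  simp only [mul_assoc]

lemma aux_fa_image (a : G) (s : Set G') :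
    (fun x : G' => a * (x : G)) '' s = {a} * (Subtype.val '' s) := by
  rw [Set.singleton_mul, ← Set.image_comp]
  rfl

lemma aux_gb_image (b : G) (s : Set G') :
    (fun y : G' => (y : G) * b) '' s = (Subtype.val '' s) * {b} := by
  rw [Set.mul_singleton, ← Set.image_comp]
  rfl

lemma aux_prod_decomp_nu [G'.Normal] (X Y : Set G) (q r : G ⧸ G') :
    (X ∩ QuotientGroup.mk ⁻¹' {q}) * (Y ∩ QuotientGroup.mk ⁻¹' {r})
      = ((fun x : G' => q.out * (x : G)) '' ((fun x : G' => q.out * (x : G)) ⁻¹' X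
            * (fun y : G' => (y : G) * r.out) ⁻¹' Y)) * {r.out} := by
  rw [aux_prod_decomp G' X Y q r, aux_fa_image, mul_assoc]

lemma aux_prod_decomp_mu [G'.Normal] (X Y : Set G) (q r : G ⧸ G') :
    (X ∩ QuotientGroup.mk ⁻¹' {q}) * (Y ∩ QuotientGroup.mk ⁻¹' {r})
      = (fun g => q.out * g) '' ((fun y : G' => (y : G) * r.out)
          '' ((fun x : G' => q.out * (x : G)) ⁻¹' X
            * (fun y : G' => (y : G) * r.out) ⁻¹' Y)) := by
  rw [aux_prod_decomp G' X Y q r, aux_gb_image, ← Set.singleton_mul]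

lemma aux_prod_subset [G'.Normal] (X Y : Set G) (q r : G ⧸ G') :
    (X ∩ QuotientGroup.mk ⁻¹' {q}) * (Y ∩ QuotientGroup.mk ⁻¹' {r})
      ⊆ (X * Y) ∩ QuotientGroup.mk ⁻¹' {q * r} := by
  rintro z ⟨x, hx, y, hy, rfl⟩
  refine ⟨Set.mul_mem_mul hx.1 hy.1, ?_⟩
  have hxq : (QuotientGroup.mk x : G ⧸ G') = q := hx.2
  have hyr : (QuotientGroup.mk y : G ⧸ G') = r := hy.2
  simp only [Set.mem_preimage, Set.mem_singleton_iff]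
  rw [QuotientGroup.mk_mul, hxq, hyr]

end auxcoset


/-- If a locally compact group `G` has an open normal unimodular subgroup `G'` satisfying
the Brunn–Minkowski inequality with exponent `n ≥ 1`, then `G` satisfies the two-sided
Brunn–Minkowski inequality with exponent `n`:
`(ν(X)/ν(XY))^{1/n} + (μ(Y)/μ(XY))^{1/n} ≤ 1`. -/
theorem stmt16 {G : Type*} [Group G] [TopologicalSpace G] [IsTopologicalGroup G]
    [LocallyCompactSpace G] [MeasurableSpace G] [BorelSpace G]
    (μ ν : Measure G) [μ.IsHaarMeasure]
    [ν.IsMulRightInvariant] [IsFiniteMeasureOnCompacts ν] [ν.IsOpenPosMeasure]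
    (G' : Subgroup G) (hG'open : IsOpen (G' : Set G)) [G'.Normal]
    (μG' : Measure G') [μG'.IsHaarMeasure] [μG'.IsMulRightInvariant]
    (n : ℕ) (hn : 1 ≤ n)
    (hBM : ∀ A B : Set G', IsCompact A → IsCompact B → 0 < μG' A → 0 < μG' B →
      μG' A ^ ((1 : ℝ) / n) + μG' B ^ ((1 : ℝ) / n) ≤ μG' (A * B) ^ ((1 : ℝ) / n)) :
    ∀ X Y : Set G, IsCompact X → IsCompact Y →
      0 < μ X → 0 < μ Y → 0 < ν X → 0 < ν Y →
      (ν X / ν (X * Y)) ^ ((1 : ℝ) / n) + (μ Y / μ (X * Y)) ^ ((1 : ℝ) / n) ≤ 1 := by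
  classical
  intro X Y hX hY hμX hμY hνX hνY
  haveI : LocallyCompactSpace G' := hG'open.isLocallyClosed.locallyCompactSpace
  haveI : BorelSpace G' := Subtype.borelSpace (G' : Set G)
  -- basic numerology
  have hn0 : (n : ℝ) ≠ 0 := Nat.cast_ne_zero.2 (by omega)
  have hinvn : (0:ℝ) ≤ (1:ℝ)/n := by positivity
  have hnn : (0:ℝ) ≤ (n:ℝ) := by positivity
  have hpow_inv : ∀ x : ℝ≥0∞, (x ^ ((1:ℝ)/n)) ^ (n:ℝ) = x := by
    intro x
    rw [← ENNReal.rpow_mul, one_div, inv_mul_cancel₀ hn0, ENNReal.rpow_one]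
  -- cosets
  set C : G ⧸ G' → Set G := fun q => QuotientGroup.mk ⁻¹' {q} with hCdef
  have hCopen : ∀ q, IsOpen (C q) := fun q => aux_coset_open G' hG'open q
  have hCmeas : ∀ q, MeasurableSet (C q) := fun q => (hCopen q).measurableSet
  set A : G ⧸ G' → Set G' := fun q => (fun x : G' => q.out * (x : G)) ⁻¹' X with hAdef
  set B : G ⧸ G' → Set G' := fun r => (fun y : G' => (y : G) * r.out) ⁻¹' Y with hBdef
  have hAcomp : ∀ q, IsCompact (A q) :=
    fun q => (aux_emb_nu G' hG'open q.out).isCompact_preimage hX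
  have hBcomp : ∀ r, IsCompact (B r) :=
    fun r => (aux_emb_mu G' hG'open r.out).isCompact_preimage hY
  set α : G ⧸ G' → ℝ≥0∞ := fun q => μG' (A q) with hαdef
  set β : G ⧸ G' → ℝ≥0∞ := fun r => μG' (B r) with hβdef
  choose cν hcν using fun q : G ⧸ G' => aux_nu_side G' hG'open μG' ν q.out
  choose cμ hcμ using fun r : G ⧸ G' => aux_mu_side G' hG'open μG' μ r.out
  have hXq : ∀ q, X ∩ C q = (fun x : G' => q.out * (x : G)) '' A q := by
    intro q
    rw [Set.image_preimage_eq_inter_range, ← aux_coset_nu, QuotientGroup.out_eq' q]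
  have hYr : ∀ r, Y ∩ C r = (fun y : G' => (y : G) * r.out) '' B r := by
    intro r
    rw [Set.image_preimage_eq_inter_range, ← aux_coset_mu, QuotientGroup.out_eq' r]
  have hνXq : ∀ q, ν (X ∩ C q) = cν q * α q := by
    intro q
    rw [hXq q]
    exact hcν q _ (hAcomp q).closure
  have hμYr : ∀ r, μ (Y ∩ C r) = cμ r * β r := by
    intro r
    rw [hYr r]
    exact hcμ r _ (hBcomp r).closure
  -- finite covers
  obtain ⟨S, hS⟩ := hX.elim_finite_subcover C (fun q => hCopen q)
    (fun x _ => Set.mem_iUnion.2 ⟨QuotientGroup.mk x, rfl⟩)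
  obtain ⟨T, hT⟩ := hY.elim_finite_subcover C (fun q => hCopen q)
    (fun y _ => Set.mem_iUnion.2 ⟨QuotientGroup.mk y, rfl⟩)
  have hνXsum : ν X ≤ ∑ q ∈ S, ν (X ∩ C q) := by
    have hXsub : X ⊆ ⋃ q ∈ S, X ∩ C q := by
      intro x hx
      obtain ⟨q, hqS, hq⟩ := Set.mem_iUnion₂.1 (hS hx)
      exact Set.mem_iUnion₂.2 ⟨q, hqS, hx, hq⟩
    exact (measure_mono hXsub).trans (measure_biUnion_finset_le S _)
  have hμYsum : μ Y ≤ ∑ r ∈ T, μ (Y ∩ C r) := by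
    have hYsub : Y ⊆ ⋃ r ∈ T, Y ∩ C r := by
      intro y hy
      obtain ⟨r, hrT, hr⟩ := Set.mem_iUnion₂.1 (hT hy)
      exact Set.mem_iUnion₂.2 ⟨r, hrT, hy, hr⟩
    exact (measure_mono hYsub).trans (measure_biUnion_finset_le T _)
  -- positivity of the maxima
  have hexS : ∃ q ∈ S, 0 < α q := by
    by_contra hcon
    push_neg at hcon
    have hz : ∀ q ∈ S, ν (X ∩ C q) = 0 := by
      intro q hq
      have h0 : α q = 0 := le_antisymm (hcon q hq) zero_le
      rw [hνXq q, h0, mul_zero]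
    have : ν X ≤ 0 := hνXsum.trans (le_of_eq (Finset.sum_eq_zero hz))
    simp only [nonpos_iff_eq_zero] at this
    exact hνX.ne' this
  have hexT : ∃ r ∈ T, 0 < β r := by
    by_contra hcon
    push_neg at hcon
    have hz : ∀ r ∈ T, μ (Y ∩ C r) = 0 := by
      intro r hr
      have h0 : β r = 0 := le_antisymm (hcon r hr) zero_le
      rw [hμYr r, h0, mul_zero]
    have : μ Y ≤ 0 := hμYsum.trans (le_of_eq (Finset.sum_eq_zero hz))
    simp only [nonpos_iff_eq_zero] at this
    exact hμY.ne' this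
  obtain ⟨p₀, hp₀S, hp₀max⟩ := Finset.exists_max_image S α ⟨hexS.choose, hexS.choose_spec.1⟩
  obtain ⟨r₀, hr₀T, hr₀max⟩ := Finset.exists_max_image T β ⟨hexT.choose, hexT.choose_spec.1⟩
  have hα₀pos : 0 < α p₀ := by
    obtain ⟨q, hqS, hq⟩ := hexS
    exact lt_of_lt_of_le hq (hp₀max q hqS)
  have hβ₀pos : 0 < β r₀ := by
    obtain ⟨r, hrT, hr⟩ := hexT
    exact lt_of_lt_of_le hr (hr₀max r hrT)
  have hα₀fin : α p₀ ≠ ∞ := (hAcomp p₀).measure_lt_top.ne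
  have hβ₀fin : β r₀ ≠ ∞ := (hBcomp r₀).measure_lt_top.ne
  set va := α p₀ ^ ((1:ℝ)/n) with hvadef
  set vb := β r₀ ^ ((1:ℝ)/n) with hvbdef
  have hva_pos : 0 < va := ENNReal.rpow_pos hα₀pos hα₀fin
  have hvb_pos : 0 < vb := ENNReal.rpow_pos hβ₀pos hβ₀fin
  have hva_fin : va ≠ ∞ := (ENNReal.rpow_lt_top_of_nonneg hinvn hα₀fin).ne
  have hvb_fin : vb ≠ ∞ := (ENNReal.rpow_lt_top_of_nonneg hinvn hβ₀fin).ne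
  have hvsum_pos : (0:ℝ≥0∞) < va + vb := lt_of_lt_of_le hva_pos le_self_add
  have hvsum_fin : va + vb ≠ ∞ := ENNReal.add_ne_top.2 ⟨hva_fin, hvb_fin⟩
  set D := (va + vb) ^ (n:ℝ) with hDdef
  have hD_pos : 0 < D := ENNReal.rpow_pos hvsum_pos hvsum_fin
  have hD_fin : D ≠ ∞ := (ENNReal.rpow_lt_top_of_nonneg hnn hvsum_fin).ne
  -- Brunn-Minkowski in the subgroup, power form
  have hBM' : ∀ q r : G ⧸ G', 0 < α q → 0 < β r →
      (α q ^ ((1:ℝ)/n) + β r ^ ((1:ℝ)/n)) ^ (n:ℝ) ≤ μG' (A q * B r) := by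
    intro q r hq hr
    have h := hBM (A q) (B r) (hAcomp q) (hBcomp r) hq hr
    calc (α q ^ ((1:ℝ)/n) + β r ^ ((1:ℝ)/n)) ^ (n:ℝ)
        ≤ (μG' (A q * B r) ^ ((1:ℝ)/n)) ^ (n:ℝ) := ENNReal.rpow_le_rpow h hnn
      _ = μG' (A q * B r) := hpow_inv _
  -- ν-side pointwise bound
  have hνkey : ∀ q ∈ S, ν (X ∩ C q) * D ≤ α p₀ * ν ((X * Y) ∩ C (q * r₀)) := by
    intro q hqS
    rcases eq_or_lt_of_le (show 0 ≤ α q from zero_le) with h0 | hqpos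
    · rw [hνXq q, ← h0, mul_zero, zero_mul]
      exact zero_le
    · have hνprod : ν ((X ∩ C q) * (Y ∩ C r₀)) = cν q * μG' (A q * B r₀) := by
        rw [aux_prod_decomp_nu G' X Y q r₀, Set.mul_singleton, Set.image_mul_right,
          measure_preimage_mul_right ν _ _]
        exact hcν q _ ((hAcomp q).mul (hBcomp r₀)).closure
      have h1 : cν q * μG' (A q * B r₀) ≤ ν ((X * Y) ∩ C (q * r₀)) := by
        rw [← hνprod]
        exact measure_mono (aux_prod_subset G' X Y q r₀)
      have hu : α q ^ ((1:ℝ)/n) ≤ va := ENNReal.rpow_le_rpow (hp₀max q hqS) hinvn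
      have h2 : α q * D ≤ α p₀ * ((α q ^ ((1:ℝ)/n) + vb) ^ (n:ℝ)) := by
        calc α q * D = (α q ^ ((1:ℝ)/n) * (va + vb)) ^ (n:ℝ) := by
              rw [ENNReal.mul_rpow_of_nonneg _ _ hnn, hpow_inv]
          _ ≤ (va * (α q ^ ((1:ℝ)/n) + vb)) ^ (n:ℝ) :=
              ENNReal.rpow_le_rpow (aux_core hu) hnn
          _ = α p₀ * ((α q ^ ((1:ℝ)/n) + vb) ^ (n:ℝ)) := by
              rw [ENNReal.mul_rpow_of_nonneg _ _ hnn, hpow_inv]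
      have h3 : (α q ^ ((1:ℝ)/n) + vb) ^ (n:ℝ) ≤ μG' (A q * B r₀) :=
        hBM' q r₀ hqpos hβ₀pos
      calc ν (X ∩ C q) * D = cν q * α q * D := by rw [hνXq q]
        _ = cν q * (α q * D) := by rw [mul_assoc]
        _ ≤ cν q * (α p₀ * ((α q ^ ((1:ℝ)/n) + vb) ^ (n:ℝ))) := mul_le_mul_right h2 _
        _ ≤ cν q * (α p₀ * μG' (A q * B r₀)) := mul_le_mul_right (mul_le_mul_right h3 _) _
        _ = α p₀ * (cν q * μG' (A q * B r₀)) := by ring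
        _ ≤ α p₀ * ν ((X * Y) ∩ C (q * r₀)) := mul_le_mul_right h1 _
  -- μ-side pointwise bound
  have hμkey : ∀ r ∈ T, μ (Y ∩ C r) * D ≤ β r₀ * μ ((X * Y) ∩ C (p₀ * r)) := by
    intro r hrT
    rcases eq_or_lt_of_le (show 0 ≤ β r from zero_le) with h0 | hrpos
    · rw [hμYr r, ← h0, mul_zero, zero_mul]
      exact zero_le
    · have hμprod : μ ((X ∩ C p₀) * (Y ∩ C r)) = cμ r * μG' (A p₀ * B r) := by
        rw [aux_prod_decomp_mu G' X Y p₀ r, Set.image_mul_left,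
          measure_preimage_mul μ _ _]
        exact hcμ r _ ((hAcomp p₀).mul (hBcomp r)).closure
      have h1 : cμ r * μG' (A p₀ * B r) ≤ μ ((X * Y) ∩ C (p₀ * r)) := by
        rw [← hμprod]
        exact measure_mono (aux_prod_subset G' X Y p₀ r)
      have hu : β r ^ ((1:ℝ)/n) ≤ vb := ENNReal.rpow_le_rpow (hr₀max r hrT) hinvn
      have h2 : β r * D ≤ β r₀ * ((va + β r ^ ((1:ℝ)/n)) ^ (n:ℝ)) := by
        calc β r * D = (β r ^ ((1:ℝ)/n) * (vb + va)) ^ (n:ℝ) := by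
              rw [ENNReal.mul_rpow_of_nonneg _ _ hnn, hpow_inv, add_comm vb va]
          _ ≤ (vb * (β r ^ ((1:ℝ)/n) + va)) ^ (n:ℝ) :=
              ENNReal.rpow_le_rpow (aux_core hu) hnn
          _ = β r₀ * ((va + β r ^ ((1:ℝ)/n)) ^ (n:ℝ)) := by
              rw [ENNReal.mul_rpow_of_nonneg _ _ hnn, hpow_inv, add_comm]
      have h3 : (va + β r ^ ((1:ℝ)/n)) ^ (n:ℝ) ≤ μG' (A p₀ * B r) :=
        hBM' p₀ r hα₀pos hrpos
      calc μ (Y ∩ C r) * D = cμ r * β r * D := by rw [hμYr r]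
        _ = cμ r * (β r * D) := by rw [mul_assoc]
        _ ≤ cμ r * (β r₀ * ((va + β r ^ ((1:ℝ)/n)) ^ (n:ℝ))) := mul_le_mul_right h2 _
        _ ≤ cμ r * (β r₀ * μG' (A p₀ * B r)) := mul_le_mul_right (mul_le_mul_right h3 _) _
        _ = β r₀ * (cμ r * μG' (A p₀ * B r)) := by ring
        _ ≤ β r₀ * μ ((X * Y) ∩ C (p₀ * r)) := mul_le_mul_right h1 _
  -- summation, ν side
  have hνdisj : ∑ q ∈ S, ν ((X * Y) ∩ C (q * r₀)) ≤ ν (X * Y) := by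
    refine aux_sum ν (X * Y) S (fun q => C (q * r₀)) (fun q => hCmeas _) ?_
    intro i hi j hj hij
    refine Set.disjoint_left.2 fun x hxi hxj => hij ?_
    have h1 : QuotientGroup.mk x = i * r₀ := hxi
    have h2 : QuotientGroup.mk x = j * r₀ := hxj
    exact mul_right_cancel (h1.symm.trans h2)
  have hμdisj : ∑ r ∈ T, μ ((X * Y) ∩ C (p₀ * r)) ≤ μ (X * Y) := by
    refine aux_sum μ (X * Y) T (fun r => C (p₀ * r)) (fun r => hCmeas _) ?_
    intro i hi j hj hij
    refine Set.disjoint_left.2 fun x hxi hxj => hij ?_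
    have h1 : QuotientGroup.mk x = p₀ * i := hxi
    have h2 : QuotientGroup.mk x = p₀ * j := hxj
    exact mul_left_cancel (h1.symm.trans h2)
  have hνfinal : ν X * D ≤ α p₀ * ν (X * Y) := by
    calc ν X * D ≤ (∑ q ∈ S, ν (X ∩ C q)) * D := mul_le_mul_left hνXsum D
      _ = ∑ q ∈ S, ν (X ∩ C q) * D := Finset.sum_mul _ _ _
      _ ≤ ∑ q ∈ S, α p₀ * ν ((X * Y) ∩ C (q * r₀)) := Finset.sum_le_sum hνkey
      _ = α p₀ * ∑ q ∈ S, ν ((X * Y) ∩ C (q * r₀)) := (Finset.mul_sum _ _ _).symm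
      _ ≤ α p₀ * ν (X * Y) := mul_le_mul_right hνdisj _
  have hμfinal : μ Y * D ≤ β r₀ * μ (X * Y) := by
    calc μ Y * D ≤ (∑ r ∈ T, μ (Y ∩ C r)) * D := mul_le_mul_left hμYsum D
      _ = ∑ r ∈ T, μ (Y ∩ C r) * D := Finset.sum_mul _ _ _
      _ ≤ ∑ r ∈ T, β r₀ * μ ((X * Y) ∩ C (p₀ * r)) := Finset.sum_le_sum hμkey
      _ = β r₀ * ∑ r ∈ T, μ ((X * Y) ∩ C (p₀ * r)) := (Finset.mul_sum _ _ _).symm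
      _ ≤ β r₀ * μ (X * Y) := mul_le_mul_right hμdisj _
  -- conclude
  have hdivν : ν X / ν (X * Y) ≤ α p₀ / D := by
    have h5 : ν X ≤ α p₀ * ν (X * Y) / D :=
      (ENNReal.le_div_iff_mul_le (Or.inl hD_pos.ne') (Or.inl hD_fin)).2 hνfinal
    have h6 : α p₀ * ν (X * Y) / D = α p₀ / D * ν (X * Y) := by
      rw [div_eq_mul_inv, div_eq_mul_inv, mul_right_comm]
    exact ENNReal.div_le_of_le_mul (h6 ▸ h5)
  have hdivμ : μ Y / μ (X * Y) ≤ β r₀ / D := by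
    have h5 : μ Y ≤ β r₀ * μ (X * Y) / D :=
      (ENNReal.le_div_iff_mul_le (Or.inl hD_pos.ne') (Or.inl hD_fin)).2 hμfinal
    have h6 : β r₀ * μ (X * Y) / D = β r₀ / D * μ (X * Y) := by
      rw [div_eq_mul_inv, div_eq_mul_inv, mul_right_comm]
    exact ENNReal.div_le_of_le_mul (h6 ▸ h5)
  have hDpow : D ^ ((1:ℝ)/n) = va + vb := by
    rw [hDdef, ← ENNReal.rpow_mul, mul_one_div, div_self hn0, ENNReal.rpow_one]
  have hfν : (ν X / ν (X * Y)) ^ ((1:ℝ)/n) ≤ va / (va + vb) := by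
    calc (ν X / ν (X * Y)) ^ ((1:ℝ)/n) ≤ (α p₀ / D) ^ ((1:ℝ)/n) :=
          ENNReal.rpow_le_rpow hdivν hinvn
      _ = va / (va + vb) := by
          rw [ENNReal.div_rpow_of_nonneg _ _ hinvn, hDpow]
  have hfμ : (μ Y / μ (X * Y)) ^ ((1:ℝ)/n) ≤ vb / (va + vb) := by
    calc (μ Y / μ (X * Y)) ^ ((1:ℝ)/n) ≤ (β r₀ / D) ^ ((1:ℝ)/n) :=
          ENNReal.rpow_le_rpow hdivμ hinvn
      _ = vb / (va + vb) := by
          rw [ENNReal.div_rpow_of_nonneg _ _ hinvn, hDpow]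
  calc (ν X / ν (X * Y)) ^ ((1:ℝ)/n) + (μ Y / μ (X * Y)) ^ ((1:ℝ)/n)
      ≤ va / (va + vb) + vb / (va + vb) := add_le_add hfν hfμ
    _ = (va + vb) / (va + vb) := ENNReal.div_add_div_same
    _ = 1 := ENNReal.div_self hvsum_pos.ne' hvsum_fin
end
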